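/- arXiv:2404.15226 — 5 statements merged into one kernel-verified Lean document; each statement's English description precedes it below -/
import Mathlib

section
/- Let 1 < μ < 2 and for λ > 0 define g(λ) = ∫_1^∞ μ s^{-(1+μ)} e^{-λs} ds (the Laplace transform of the Pareto(μ) density). Then lim_{λ → 0+} λ^{-μ} ( g(λ) - 1 + λ·μ/(μ-1) ) = -Γ(1-μ), where Γ is the real Gamma function. (Equivalently, g(λ) = 1 - λ E[s] - Γ(1-μ) λ^μ + o(λ^μ) as λ → 0+, with E[s] = μ/(μ-1).) -/
open MeasureTheory Filter Topology Set

/-! ### Auxiliary elementary inequalities -/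

private lemma phi_nonneg {x : ℝ} (hx : 0 ≤ x) : 0 ≤ Real.exp (-x) - 1 + x := by
  have := Real.add_one_le_exp (-x); linarith

private lemma phi_le_lin {x : ℝ} (hx : 0 ≤ x) : Real.exp (-x) - 1 + x ≤ x := by
  have h : Real.exp (-x) ≤ 1 := Real.exp_zero ▸ Real.exp_le_exp.mpr (by linarith)
  linarith

private lemma phi_le_sq {x : ℝ} (hx : 0 ≤ x) : Real.exp (-x) - 1 + x ≤ x ^ 2 / 2 := by
  have key : MonotoneOn (fun y : ℝ => y ^ 2 / 2 - (Real.exp (-y) - 1 + y)) (Ici 0) := by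
    have hd : ∀ y : ℝ, HasDerivAt (fun y : ℝ => y ^ 2 / 2 - (Real.exp (-y) - 1 + y))
        (y - (-Real.exp (-y) + 1)) y := by
      intro y
      have h1 : HasDerivAt (fun y : ℝ => y ^ 2 / 2) y y := by
        simpa using ((hasDerivAt_pow 2 y).div_const 2)
      have h2 : HasDerivAt (fun y : ℝ => Real.exp (-y)) (-Real.exp (-y)) y := by
        exact ((Real.hasDerivAt_exp (-y)).comp y (hasDerivAt_neg y)).congr_deriv (by ring)
      exact h1.sub ((h2.sub_const 1).add (hasDerivAt_id y))
    apply monotoneOn_of_deriv_nonneg (convex_Ici 0)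
    · exact fun y _ => (hd y).continuousAt.continuousWithinAt
    · exact fun y _ => (hd y).differentiableAt.differentiableWithinAt
    · intro y hy
      rw [interior_Ici] at hy
      rw [(hd y).deriv]
      have := Real.add_one_le_exp (-y)
      linarith
  have h0 := key (self_mem_Ici) hx hx
  simp at h0
  linarith

private lemma rpow_mul_self {u : ℝ} (hu : 0 < u) (a : ℝ) : u ^ a * u = u ^ (a + 1) := by
  nth_rewrite 2 [show u = u ^ (1:ℝ) by rw [Real.rpow_one]]
  rw [← Real.rpow_add hu]

private lemma rpow_mul_sq {u : ℝ} (hu : 0 < u) (a : ℝ) : u ^ a * u ^ 2 = u ^ (a + 2) := by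
  rw [show u ^ 2 = u ^ ((2:ℕ):ℝ) by rw [Real.rpow_natCast], ← Real.rpow_add hu]
  norm_num

/-! ### A limit lemma for improper integrals -/

private lemma tendsto_integral_Ioi_zero (f : ℝ → ℝ) (hf : IntegrableOn f (Ioi 0)) :
    Tendsto (fun a : ℝ => ∫ x in Ioi a, f x) (𝓝[>] (0:ℝ)) (𝓝 (∫ x in Ioi 0, f x)) := by
  have hIoc : IntegrableOn f (Ioc 0 1) := hf.mono Ioc_subset_Ioi_self le_rfl
  have hIcc : IntegrableOn f (Icc 0 1) := by
    rwa [integrableOn_Icc_iff_integrableOn_Ioc]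
  have hcont : ContinuousOn (fun a => ∫ x in a..(1:ℝ), f x) (Icc 0 1) := by
    have := intervalIntegral.continuousOn_primitive_interval_left
      (f := f) (μ := volume) (a := 0) (b := 1) (by rwa [uIcc_of_le zero_le_one])
    rwa [uIcc_of_le zero_le_one] at this
  have hmem : Ioi (0:ℝ) ∩ Iio 1 ∈ 𝓝[>] (0:ℝ) :=
    inter_mem_nhdsWithin _ (Iio_mem_nhds one_pos)
  have hle : 𝓝[>] (0:ℝ) ≤ 𝓝[Icc 0 1] (0:ℝ) := by
    rw [nhdsWithin_le_iff]
    exact mem_of_superset hmem (fun x hx => ⟨hx.1.le, hx.2.le⟩)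
  have htend : Tendsto (fun a => ∫ x in a..(1:ℝ), f x) (𝓝[>] (0:ℝ))
      (𝓝 (∫ x in (0:ℝ)..1, f x)) :=
    (hcont 0 ⟨le_refl 0, zero_le_one⟩).mono_left hle
  have key : ∀ a : ℝ, 0 ≤ a → a ≤ 1 →
      ∫ x in Ioi a, f x = (∫ x in a..(1:ℝ), f x) + ∫ x in Ioi 1, f x := by
    intro a ha0 ha1
    rw [intervalIntegral.integral_of_le ha1, ← setIntegral_union (Ioc_disjoint_Ioi le_rfl)
      measurableSet_Ioi (hf.mono (fun x hx => lt_of_le_of_lt ha0 hx.1) le_rfl)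
      (hf.mono (Ioi_subset_Ioi (by linarith)) le_rfl), Ioc_union_Ioi_eq_Ioi ha1]
  have heq : ∀ᶠ a in 𝓝[>] (0:ℝ),
      (∫ x in a..(1:ℝ), f x) + ∫ x in Ioi 1, f x = ∫ x in Ioi a, f x := by
    filter_upwards [hmem] with a ha
    exact (key a ha.1.le ha.2.le).symm
  have h0 : ∫ x in Ioi (0:ℝ), f x = (∫ x in (0:ℝ)..1, f x) + ∫ x in Ioi 1, f x :=
    key 0 le_rfl zero_le_one
  rw [h0]
  exact Tendsto.congr' heq (htend.add tendsto_const_nhds)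

private lemma tendsto_rpow_pos_zero {p : ℝ} (hp : 0 < p) :
    Tendsto (fun x : ℝ => x ^ p) (𝓝[>] (0:ℝ)) (𝓝 0) := by
  have h : ContinuousAt (fun x : ℝ => x ^ p) 0 :=
    Real.continuousAt_rpow_const 0 p (Or.inr hp.le)
  have := h.continuousWithinAt (s := Ioi 0)
  rwa [ContinuousWithinAt, Real.zero_rpow hp.ne'] at this

/-! ### The key integrand `F` and the auxiliary antiderivative `Gaux` -/

section Main

variable {μ : ℝ} (hμ1 : 1 < μ) (hμ2 : μ < 2)

private lemma F_contOn (μ : ℝ) :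
    ContinuousOn (fun u : ℝ => μ * u ^ (-(1+μ)) * (Real.exp (-u) - 1 + u)) (Ioi 0) := by
  apply ContinuousOn.mul
  · exact continuousOn_const.mul
      (continuousOn_id.rpow_const (fun x hx => Or.inl (ne_of_gt hx)))
  · fun_prop

include hμ1 hμ2 in
private lemma F_integrable :
    IntegrableOn (fun u : ℝ => μ * u ^ (-(1+μ)) * (Real.exp (-u) - 1 + u)) (Ioi 0) := by
  have hμ0 : (0:ℝ) < μ := by linarith
  rw [show Ioi (0:ℝ) = Ioc 0 1 ∪ Ioi 1 from (Ioc_union_Ioi_eq_Ioi zero_le_one).symm]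
  apply IntegrableOn.union
  · have hg : IntegrableOn (fun u : ℝ => μ/2 * u ^ (1-μ)) (Ioc 0 1) := by
      apply Integrable.const_mul
      exact (intervalIntegrable_iff_integrableOn_Ioc_of_le zero_le_one).mp
        (intervalIntegral.intervalIntegrable_rpow' (by linarith))
    apply hg.mono'
    · exact ((F_contOn μ).mono Ioc_subset_Ioi_self).aestronglyMeasurable measurableSet_Ioc
    · rw [ae_restrict_iff' measurableSet_Ioc]
      filter_upwards with u hu
      have hu0 : 0 < u := hu.1
      have h2 : Real.exp (-u) - 1 + u ≤ u ^ 2 / 2 := phi_le_sq hu0.le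
      rw [Real.norm_of_nonneg
        (mul_nonneg (mul_nonneg hμ0.le (Real.rpow_nonneg hu0.le _)) (phi_nonneg hu0.le))]
      calc μ * u ^ (-(1+μ)) * (Real.exp (-u) - 1 + u)
          ≤ μ * u ^ (-(1+μ)) * (u ^ 2 / 2) :=
            mul_le_mul_of_nonneg_left h2 (by positivity)
        _ = μ / 2 * (u ^ (-(1+μ)) * u ^ 2) := by ring
        _ = μ / 2 * u ^ (1-μ) := by rw [rpow_mul_sq hu0]; congr 2; ring
  · have hg : IntegrableOn (fun u : ℝ => μ * u ^ (-μ)) (Ioi 1) :=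
      (integrableOn_Ioi_rpow_of_lt (by linarith) one_pos).const_mul μ
    apply hg.mono'
    · exact ((F_contOn μ).mono (Ioi_subset_Ioi zero_le_one)).aestronglyMeasurable
        measurableSet_Ioi
    · rw [ae_restrict_iff' measurableSet_Ioi]
      filter_upwards with u hu
      have hu0 : 0 < u := lt_trans one_pos hu
      have h2 : Real.exp (-u) - 1 + u ≤ u := phi_le_lin hu0.le
      rw [Real.norm_of_nonneg
        (mul_nonneg (mul_nonneg hμ0.le (Real.rpow_nonneg hu0.le _)) (phi_nonneg hu0.le))]
      calc μ * u ^ (-(1+μ)) * (Real.exp (-u) - 1 + u)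
          ≤ μ * u ^ (-(1+μ)) * u := mul_le_mul_of_nonneg_left h2 (by positivity)
        _ = μ * (u ^ (-(1+μ)) * u) := by ring
        _ = μ * u ^ (-μ) := by rw [rpow_mul_self hu0]; congr 2; ring

private noncomputable def Gaux (μ : ℝ) (u : ℝ) : ℝ :=
  -(u ^ (-μ) * (Real.exp (-u) - 1 + u)) -
    (μ - 1)⁻¹ * (u ^ (1 - μ) * (1 - Real.exp (-u)))

include hμ1 in
private lemma Gaux_hasDerivAt {u : ℝ} (hu : 0 < u) :
    HasDerivAt (Gaux μ)
      (μ * u ^ (-(1+μ)) * (Real.exp (-u) - 1 + u)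
        - (μ - 1)⁻¹ * (Real.exp (-u) * u ^ (1 - μ))) u := by
  have hne : u ≠ 0 := hu.ne'
  have hA : HasDerivAt (fun u : ℝ => u ^ (-μ)) (-μ * u ^ (-μ - 1)) u :=
    Real.hasDerivAt_rpow_const (Or.inl hne)
  have hB : HasDerivAt (fun u : ℝ => u ^ (1 - μ)) ((1 - μ) * u ^ (1 - μ - 1)) u :=
    Real.hasDerivAt_rpow_const (Or.inl hne)
  have hexp : HasDerivAt (fun u : ℝ => Real.exp (-u)) (-Real.exp (-u)) u := by
    exact ((Real.hasDerivAt_exp (-u)).comp u (hasDerivAt_neg u)).congr_deriv (by ring)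
  have hφ : HasDerivAt (fun u : ℝ => Real.exp (-u) - 1 + u) (-Real.exp (-u) + 1) u :=
    (hexp.sub_const 1).add (hasDerivAt_id u)
  have hψ : HasDerivAt (fun u : ℝ => 1 - Real.exp (-u)) (Real.exp (-u)) u := by
    exact ((hasDerivAt_const u (1:ℝ)).sub hexp).congr_deriv (by ring)
  have h := ((hA.mul hφ).neg).sub (((hB.mul hψ)).const_mul (μ - 1)⁻¹)
  have e1 : u ^ (-μ - 1) = u ^ (-(1+μ)) := by congr 1; ring
  have e2 : u ^ (1 - μ - 1) = u ^ (-μ) := by congr 1; ring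
  refine h.congr_deriv ?_
  rw [e1, e2]
  have hne1 : μ - 1 ≠ 0 := by linarith
  field_simp
  ring

include hμ1 in
private lemma Gaux_tendsto_atTop : Tendsto (Gaux μ) atTop (𝓝 0) := by
  have hμ0 : (0:ℝ) < μ := by linarith
  have l1 : Tendsto (fun u : ℝ => u ^ (-μ)) atTop (𝓝 0) := tendsto_rpow_neg_atTop hμ0
  have l2 : Tendsto (fun u : ℝ => u ^ (1 - μ)) atTop (𝓝 0) := by
    rw [show (1 - μ) = -(μ - 1) by ring]
    exact tendsto_rpow_neg_atTop (by linarith)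
  have l3 : Tendsto (fun u : ℝ => Real.exp (-u)) atTop (𝓝 0) :=
    Real.tendsto_exp_neg_atTop_nhds_zero
  have T : Tendsto (fun u : ℝ =>
      -(u ^ (-μ) * Real.exp (-u) - u ^ (-μ) + u ^ (1 - μ)) -
        (μ - 1)⁻¹ * (u ^ (1 - μ) * (1 - Real.exp (-u)))) atTop (𝓝 0) := by
    have : Tendsto (fun u : ℝ =>
        -(u ^ (-μ) * Real.exp (-u) - u ^ (-μ) + u ^ (1 - μ)) -
          (μ - 1)⁻¹ * (u ^ (1 - μ) * (1 - Real.exp (-u)))) atTop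
        (𝓝 (-((0:ℝ) * 0 - 0 + 0) - (μ - 1)⁻¹ * (0 * (1 - 0)))) :=
      (((l1.mul l3).sub l1).add l2).neg.sub
        ((l2.mul (tendsto_const_nhds.sub l3)).const_mul _)
    simpa using this
  apply T.congr'
  filter_upwards [eventually_gt_atTop (0:ℝ)] with u hu
  unfold Gaux
  have h1 : u ^ (-μ) * u = u ^ (1 - μ) := by
    rw [rpow_mul_self hu]; congr 1; ring
  ring_nf
  rw [← h1]; ring

include hμ1 hμ2 in
private lemma Gaux_tendsto_zero : Tendsto (Gaux μ) (𝓝[>] (0:ℝ)) (𝓝 0) := by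
  have h2μ : (0:ℝ) < 2 - μ := by linarith
  have hr : Tendsto (fun x : ℝ => x ^ (2 - μ)) (𝓝[>] (0:ℝ)) (𝓝 0) :=
    tendsto_rpow_pos_zero h2μ
  have t1 : Tendsto (fun u : ℝ => u ^ (-μ) * (Real.exp (-u) - 1 + u)) (𝓝[>] (0:ℝ)) (𝓝 0) := by
    apply squeeze_zero' (t₀ := 𝓝[>] (0:ℝ))
      (g := fun u : ℝ => u ^ (2 - μ) / 2)
    · filter_upwards [self_mem_nhdsWithin] with u (hu : 0 < u)
      exact mul_nonneg (Real.rpow_nonneg hu.le _) (phi_nonneg hu.le)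
    · filter_upwards [self_mem_nhdsWithin] with u (hu : 0 < u)
      calc u ^ (-μ) * (Real.exp (-u) - 1 + u) ≤ u ^ (-μ) * (u ^ 2 / 2) :=
            mul_le_mul_of_nonneg_left (phi_le_sq hu.le) (Real.rpow_nonneg hu.le _)
        _ = u ^ (-μ) * u ^ 2 / 2 := by ring
        _ = u ^ (2 - μ) / 2 := by rw [rpow_mul_sq hu]; congr 2; ring
    · simpa using hr.div_const 2
  have t2 : Tendsto (fun u : ℝ => u ^ (1 - μ) * (1 - Real.exp (-u))) (𝓝[>] (0:ℝ)) (𝓝 0) := by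
    apply squeeze_zero' (t₀ := 𝓝[>] (0:ℝ)) (g := fun u : ℝ => u ^ (2 - μ))
    · filter_upwards [self_mem_nhdsWithin] with u (hu : 0 < u)
      have : Real.exp (-u) ≤ 1 := Real.exp_zero ▸ Real.exp_le_exp.mpr (by linarith)
      exact mul_nonneg (Real.rpow_nonneg hu.le _) (by linarith)
    · filter_upwards [self_mem_nhdsWithin] with u (hu : 0 < u)
      have hb : 1 - Real.exp (-u) ≤ u := by
        have := Real.add_one_le_exp (-u); linarith
      calc u ^ (1 - μ) * (1 - Real.exp (-u)) ≤ u ^ (1 - μ) * u :=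
            mul_le_mul_of_nonneg_left hb (Real.rpow_nonneg hu.le _)
        _ = u ^ (2 - μ) := by rw [rpow_mul_self hu]; congr 1; ring
    · exact hr
  have := t1.neg.sub (t2.const_mul (μ - 1)⁻¹)
  rw [show (-0 - (μ - 1)⁻¹ * 0 : ℝ) = 0 by ring] at this
  exact this

include hμ1 hμ2 in
private lemma F_integral_value :
    ∫ u in Ioi (0:ℝ), μ * u ^ (-(1+μ)) * (Real.exp (-u) - 1 + u) = -Real.Gamma (1 - μ) := by
  set F : ℝ → ℝ := fun u => μ * u ^ (-(1+μ)) * (Real.exp (-u) - 1 + u) with hF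
  have hFint : IntegrableOn F (Ioi 0) := F_integrable hμ1 hμ2
  have hΓint : IntegrableOn (fun x : ℝ => Real.exp (-x) * x ^ (1-μ)) (Ioi 0) := by
    have := Real.GammaIntegral_convergent (show (0:ℝ) < 2 - μ by linarith)
    rwa [show (2:ℝ) - μ - 1 = 1 - μ by ring] at this
  have hΓ : Real.Gamma (2 - μ) = ∫ x in Ioi (0:ℝ), Real.exp (-x) * x ^ (1-μ) := by
    rw [Real.Gamma_eq_integral (show (0:ℝ) < 2 - μ by linarith),
      show (2:ℝ) - μ - 1 = 1 - μ by ring]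
  have key : ∀ ε : ℝ, 0 < ε → ∫ u in Ioi ε, F u =
      (μ - 1)⁻¹ * (∫ u in Ioi ε, Real.exp (-u) * u ^ (1-μ)) - Gaux μ ε := by
    intro ε hε
    have hd : ∀ x ∈ Ici ε, HasDerivAt (Gaux μ)
        (F x - (μ - 1)⁻¹ * (Real.exp (-x) * x ^ (1-μ))) x :=
      fun x hx => Gaux_hasDerivAt hμ1 (lt_of_lt_of_le hε hx)
    have hFi : IntegrableOn F (Ioi ε) := hFint.mono (Ioi_subset_Ioi hε.le) le_rfl
    have hΓi : IntegrableOn (fun u : ℝ => (μ - 1)⁻¹ * (Real.exp (-u) * u ^ (1-μ))) (Ioi ε) :=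
      (hΓint.mono (Ioi_subset_Ioi hε.le) le_rfl).const_mul _
    have h := integral_Ioi_of_hasDerivAt_of_tendsto' hd (hFi.sub hΓi) (Gaux_tendsto_atTop hμ1)
    rw [integral_sub hFi hΓi, integral_const_mul] at h
    linarith [h]
  have lim1 : Tendsto (fun ε : ℝ => ∫ u in Ioi ε, F u) (𝓝[>] (0:ℝ))
      (𝓝 (∫ u in Ioi (0:ℝ), F u)) := tendsto_integral_Ioi_zero F hFint
  have lim2 : Tendsto (fun ε : ℝ =>
      (μ - 1)⁻¹ * (∫ u in Ioi ε, Real.exp (-u) * u ^ (1-μ)) - Gaux μ ε) (𝓝[>] (0:ℝ))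
      (𝓝 ((μ - 1)⁻¹ * Real.Gamma (2 - μ) - 0)) := by
    rw [hΓ]
    exact ((tendsto_integral_Ioi_zero _ hΓint).const_mul _).sub (Gaux_tendsto_zero hμ1 hμ2)
  have heq : ∀ᶠ ε in 𝓝[>] (0:ℝ),
      (μ - 1)⁻¹ * (∫ u in Ioi ε, Real.exp (-u) * u ^ (1-μ)) - Gaux μ ε = ∫ u in Ioi ε, F u := by
    filter_upwards [self_mem_nhdsWithin] with ε (hε : 0 < ε)
    exact (key ε hε).symm
  have hval : ∫ u in Ioi (0:ℝ), F u = (μ - 1)⁻¹ * Real.Gamma (2 - μ) - 0 :=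
    tendsto_nhds_unique lim1 (lim2.congr' heq)
  rw [hval, show (2:ℝ) - μ = (1 - μ) + 1 by ring,
    Real.Gamma_add_one (show (1:ℝ) - μ ≠ 0 by intro h; linarith [h])]
  have hne1 : μ - 1 ≠ 0 := by intro h; linarith [h]
  field_simp
  ring

end Main

/-- For `1 < μ < 2`, the Laplace transform
`g(λ) = ∫_1^∞ μ s^{-(1+μ)} e^{-λ s} ds` of the Pareto(μ) density satisfies
`λ^{-μ} (g(λ) - 1 + λ μ/(μ-1)) → -Γ(1-μ)` as `λ → 0⁺`. -/
theorem pareto_laplace_expansion (μ : ℝ) (hμ1 : 1 < μ) (hμ2 : μ < 2) :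
    Tendsto (fun l : ℝ =>
        l ^ (-μ) *
          ((∫ s in Ioi (1 : ℝ), μ * s ^ (-(1 + μ)) * Real.exp (-l * s)) - 1 + l * (μ / (μ - 1))))
      (𝓝[>] 0) (𝓝 (-Real.Gamma (1 - μ))) := by
  have hμ0 : (0:ℝ) < μ := by linarith
  have hne1 : μ - 1 ≠ 0 := by intro h; linarith [h]
  set F : ℝ → ℝ := fun u => μ * u ^ (-(1+μ)) * (Real.exp (-u) - 1 + u) with hF
  have hFint : IntegrableOn F (Ioi 0) := F_integrable hμ1 hμ2
  have main : ∀ l : ℝ, 0 < l →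
      (∫ s in Ioi (1:ℝ), μ * s ^ (-(1 + μ)) * Real.exp (-l * s)) - 1 + l * (μ / (μ - 1))
        = l ^ μ * ∫ u in Ioi l, F u := by
    intro l hl
    have hb : IntegrableOn (fun s : ℝ => μ * s ^ (-(1+μ))) (Ioi 1) :=
      (integrableOn_Ioi_rpow_of_lt (by linarith) one_pos).const_mul μ
    have ha : IntegrableOn (fun s : ℝ => μ * s ^ (-(1+μ)) * Real.exp (-l * s)) (Ioi 1) := by
      apply hb.mono'
      · have hcont : ContinuousOn
            (fun s : ℝ => μ * s ^ (-(1+μ)) * Real.exp (-l * s)) (Ioi 1) := by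
          apply ContinuousOn.mul
          · exact continuousOn_const.mul
              (continuousOn_id.rpow_const (fun x hx => Or.inl (ne_of_gt (lt_trans one_pos hx))))
          · fun_prop
        exact hcont.aestronglyMeasurable measurableSet_Ioi
      · rw [ae_restrict_iff' measurableSet_Ioi]
        filter_upwards with s hs
        have hs0 : 0 < s := lt_trans one_pos hs
        have he : Real.exp (-l * s) ≤ 1 :=
          Real.exp_zero ▸ Real.exp_le_exp.mpr (by nlinarith)
        rw [Real.norm_of_nonneg (by positivity)]
        exact mul_le_of_le_one_right (by positivity) he
    have hceq : EqOn (fun s : ℝ => (μ * l) * s ^ (-μ))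
        (fun s : ℝ => μ * s ^ (-(1+μ)) * (l * s)) (Ioi 1) := by
      intro s hs
      have hs0 : 0 < s := lt_trans one_pos hs
      have : s ^ (-(1+μ)) * s = s ^ (-μ) := by
        rw [rpow_mul_self hs0]; congr 1; ring
      simp only
      rw [← this]; ring
    have hc : IntegrableOn (fun s : ℝ => μ * s ^ (-(1+μ)) * (l * s)) (Ioi 1) :=
      IntegrableOn.congr_fun
        ((integrableOn_Ioi_rpow_of_lt (by linarith : -μ < -1) one_pos).const_mul (μ * l))
        hceq measurableSet_Ioi
    have hIb : ∫ s in Ioi (1:ℝ), μ * s ^ (-(1+μ)) = 1 := by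
      rw [integral_const_mul, integral_Ioi_rpow_of_lt (by linarith : -(1+μ) < -1) one_pos,
        Real.one_rpow, show -(1+μ) + 1 = -μ by ring]
      field_simp
    have hIc : ∫ s in Ioi (1:ℝ), μ * s ^ (-(1+μ)) * (l * s) = l * (μ / (μ - 1)) := by
      rw [← setIntegral_congr_fun measurableSet_Ioi hceq, integral_const_mul,
        integral_Ioi_rpow_of_lt (by linarith : -μ < -1) one_pos,
        Real.one_rpow]
      have h1μ : (1:ℝ) - μ ≠ 0 := by intro h; linarith
      rw [show -μ + 1 = -(μ - 1) by ring, neg_div_neg_eq]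
      field_simp
    have hsplit : (fun s : ℝ => μ * s ^ (-(1+μ)) * (Real.exp (-(l*s)) - 1 + l*s))
        = fun s : ℝ => (μ * s ^ (-(1+μ)) * Real.exp (-l * s) - μ * s ^ (-(1+μ)))
            + μ * s ^ (-(1+μ)) * (l * s) := by
      funext s
      rw [neg_mul]
      ring
    have stepA : ∫ s in Ioi (1:ℝ), μ * s ^ (-(1+μ)) * (Real.exp (-(l*s)) - 1 + l*s)
        = (∫ s in Ioi (1:ℝ), μ * s ^ (-(1+μ)) * Real.exp (-l * s)) - 1 + l * (μ / (μ - 1)) := by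
      have hab : IntegrableOn
          (fun s : ℝ => μ * s ^ (-(1+μ)) * Real.exp (-l * s) - μ * s ^ (-(1+μ))) (Ioi 1) :=
        ha.sub hb
      rw [hsplit, integral_add hab hc, integral_sub ha hb, hIb, hIc]
    have hFcomp : EqOn (fun s : ℝ => F (l * s))
        (fun s : ℝ => l ^ (-(1+μ)) * (μ * s ^ (-(1+μ)) * (Real.exp (-(l*s)) - 1 + l*s)))
        (Ioi 1) := by
      intro s hs
      have hs0 : 0 < s := lt_trans one_pos hs
      simp only [hF]
      rw [Real.mul_rpow hl.le hs0.le]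
      ring
    have hsub := MeasureTheory.integral_comp_mul_left_Ioi F 1 hl
    rw [mul_one, smul_eq_mul, setIntegral_congr_fun measurableSet_Ioi hFcomp,
      integral_const_mul] at hsub
    have hlne : l ^ (-(1+μ)) ≠ 0 := (Real.rpow_pos_of_pos hl _).ne'
    have hmul : l ^ (-(1+μ)) * (l ^ μ * ∫ u in Ioi l, F u) = l⁻¹ * ∫ u in Ioi l, F u := by
      rw [← mul_assoc, ← Real.rpow_add hl, show -(1+μ) + μ = (-1:ℝ) by ring,
        Real.rpow_neg_one]
    have stepB : ∫ s in Ioi (1:ℝ), μ * s ^ (-(1+μ)) * (Real.exp (-(l*s)) - 1 + l*s)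
        = l ^ μ * ∫ u in Ioi l, F u :=
      mul_left_cancel₀ hlne (hsub.trans hmul.symm)
    rw [← stepA, stepB]
  have hval : (∫ u in Ioi (0:ℝ), F u) = -Real.Gamma (1 - μ) := F_integral_value hμ1 hμ2
  have lim : Tendsto (fun l : ℝ => ∫ u in Ioi l, F u) (𝓝[>] (0:ℝ))
      (𝓝 (-Real.Gamma (1 - μ))) := hval ▸ tendsto_integral_Ioi_zero F hFint
  apply Tendsto.congr' _ lim
  filter_upwards [self_mem_nhdsWithin] with l (hl : 0 < l)
  rw [main l hl, ← mul_assoc, ← Real.rpow_add hl, show -μ + μ = (0:ℝ) by ring,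
    Real.rpow_zero, one_mul]
end

section
/- Let 1 < μ < 2. Then lim_{λ → 0+} λ^{1-μ} ( ∫_1^∞ μ s^{-μ} e^{-λs} ds - μ/(μ-1) ) = μ Γ(1-μ). (The integral equals E[s e^{-λs}] for s Pareto(μ), so E[s e^{-λs}] = μ/(μ-1) + μ Γ(1-μ) λ^{μ-1} + o(λ^{μ-1}) as λ → 0+.) -/
open MeasureTheory Filter Topology Set

namespace ParetoAux

lemma exp_sub_one_abs_le {x : ℝ} (hx : 0 ≤ x) : |Real.exp (-x) - 1| ≤ x := by
  have h1 : Real.exp (-x) ≤ 1 := Real.exp_le_one_iff.mpr (by linarith)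
  have h2 : 1 - x ≤ Real.exp (-x) := by
    have := Real.add_one_le_exp (-x); linarith
  rw [abs_sub_comm, abs_of_nonneg (by linarith)]; linarith

lemma g_contOn (μ : ℝ) :
    ContinuousOn (fun u : ℝ => u ^ (-μ) * (Real.exp (-u) - 1)) (Ioi 0) :=
  (continuousOn_id.rpow_const fun x hx => Or.inl (ne_of_gt hx)).mul
    (((Real.continuous_exp.comp continuous_neg).continuousOn).sub continuousOn_const)

lemma g_integrableOn_Ioc (μ : ℝ) (hμ2 : μ < 2) {l : ℝ} :
    IntegrableOn (fun u : ℝ => u ^ (-μ) * (Real.exp (-u) - 1)) (Ioc 0 l) := by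
  rcases le_or_gt l 0 with h | h
  · rw [Ioc_eq_empty (not_lt.mpr h)]
    exact integrableOn_empty
  have hint : IntegrableOn (fun u : ℝ => u ^ (1 - μ)) (Ioc 0 l) := by
    have := intervalIntegral.intervalIntegrable_rpow' (a := 0) (b := l) (r := 1 - μ)
      (by linarith)
    rwa [intervalIntegrable_iff_integrableOn_Ioc_of_le h.le] at this
  refine hint.mono' (((g_contOn μ).mono Ioc_subset_Ioi_self).aestronglyMeasurable measurableSet_Ioc) ?_
  filter_upwards [ae_restrict_mem measurableSet_Ioc] with x hx
  have hx0 : 0 < x := hx.1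
  rw [Real.norm_eq_abs, abs_mul, abs_of_nonneg (Real.rpow_nonneg hx0.le _)]
  calc x ^ (-μ) * |Real.exp (-x) - 1| ≤ x ^ (-μ) * x :=
        mul_le_mul_of_nonneg_left (exp_sub_one_abs_le hx0.le) (Real.rpow_nonneg hx0.le _)
    _ = x ^ (1 - μ) := by
        rw [show (1 : ℝ) - μ = -μ + 1 by ring, Real.rpow_add hx0, Real.rpow_one]

lemma g_integrableOn_Ioi_one (μ : ℝ) (hμ1 : 1 < μ) {c : ℝ} (hc : 0 < c) :
    IntegrableOn (fun u : ℝ => u ^ (-μ) * (Real.exp (-u) - 1)) (Ioi c) := by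
  refine (integrableOn_Ioi_rpow_of_lt (by linarith : -μ < -1) hc).mono'
    (((g_contOn μ).mono (Ioi_subset_Ioi hc.le)).aestronglyMeasurable measurableSet_Ioi) ?_
  filter_upwards [ae_restrict_mem measurableSet_Ioi] with x hx
  have hx0 : 0 < x := hc.trans hx
  rw [Real.norm_eq_abs, abs_mul, abs_of_nonneg (Real.rpow_nonneg hx0.le _)]
  have h1 : Real.exp (-x) ≤ 1 := Real.exp_le_one_iff.mpr (by linarith)
  have h2 : 0 < Real.exp (-x) := Real.exp_pos _
  calc x ^ (-μ) * |Real.exp (-x) - 1| ≤ x ^ (-μ) * 1 := by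
        apply mul_le_mul_of_nonneg_left _ (Real.rpow_nonneg hx0.le _)
        rw [abs_sub_comm, abs_of_nonneg (by linarith)]; linarith
    _ = x ^ (-μ) := mul_one _

lemma g_integrableOn (μ : ℝ) (hμ1 : 1 < μ) (hμ2 : μ < 2) :
    IntegrableOn (fun u : ℝ => u ^ (-μ) * (Real.exp (-u) - 1)) (Ioi 0) := by
  rw [← Ioc_union_Ioi_eq_Ioi (zero_le_one (α := ℝ))]
  exact (g_integrableOn_Ioc μ hμ2).union (g_integrableOn_Ioi_one μ hμ1 one_pos)


lemma g_integral (μ : ℝ) (hμ1 : 1 < μ) (hμ2 : μ < 2) :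
    ∫ u in Ioi (0:ℝ), u ^ (-μ) * (Real.exp (-u) - 1) = Real.Gamma (1 - μ) := by
  have hμ0 : (1:ℝ) - μ ≠ 0 := by intro h; linarith
  set φ : ℝ → ℝ := fun u => Real.exp (-u) * u ^ (1 - μ) / (1 - μ) with hφdef
  have hφint : IntegrableOn φ (Ioi 0) := by
    have h0 := Real.GammaIntegral_convergent (show (0:ℝ) < 2 - μ by linarith)
    have h2 : (2 : ℝ) - μ - 1 = 1 - μ := by ring
    rw [h2] at h0
    exact h0.div_const _
  have hφval : ∫ u in Ioi (0:ℝ), φ u = Real.Gamma (1 - μ) := by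
    have hG : Real.Gamma (2 - μ) = (1 - μ) * Real.Gamma (1 - μ) := by
      have := Real.Gamma_add_one hμ0
      rw [show (1:ℝ) - μ + 1 = 2 - μ by ring] at this
      exact this
    have hGi : Real.Gamma (2 - μ) = ∫ x in Ioi (0:ℝ), Real.exp (-x) * x ^ ((1:ℝ) - μ) := by
      rw [Real.Gamma_eq_integral (show (0:ℝ) < 2 - μ by linarith)]
      simp only [show (2:ℝ) - μ - 1 = 1 - μ by ring]
    rw [hφdef]
    simp only [integral_div]
    rw [← hGi, hG]
    field_simp
  have hgint := g_integrableOn μ hμ1 hμ2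
  set h : ℝ → ℝ := fun u => u ^ (1 - μ) * (Real.exp (-u) - 1) / (1 - μ) with hhdef
  have hderiv : ∀ x ∈ Ioi (0:ℝ), HasDerivAt h
      (x ^ (-μ) * (Real.exp (-x) - 1) - φ x) x := by
    intro x hx
    have hx0 : (0:ℝ) < x := hx
    have d1 : HasDerivAt (fun u : ℝ => u ^ ((1:ℝ) - μ)) ((1 - μ) * x ^ ((1:ℝ) - μ - 1)) x :=
      Real.hasDerivAt_rpow_const (Or.inl hx0.ne')
    have d2 : HasDerivAt (fun u : ℝ => Real.exp (-u) - 1) (Real.exp (-x) * (-1)) x := by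
      exact ((Real.hasDerivAt_exp (-x)).comp x ((hasDerivAt_id x).neg)).sub_const 1
    have d3 := (d1.mul d2).div_const (1 - μ)
    refine HasDerivAt.congr_deriv (f := h) d3 ?_
    symm
    rw [show (1:ℝ) - μ - 1 = -μ by ring, hφdef]
    field_simp
    ring
  have hcont : ContinuousWithinAt h (Ici 0) 0 := by
    have h00 : h 0 = 0 := by simp [hhdef]
    rw [ContinuousWithinAt, h00]
    have hb : Tendsto (fun x : ℝ => x ^ ((2:ℝ) - μ) / (μ - 1)) (𝓝[Ici 0] 0) (𝓝 0) := by
      have := ((Real.continuousAt_rpow_const 0 (2 - μ)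
        (Or.inr (by linarith))).div_const (μ - 1)).tendsto
      rw [Real.zero_rpow (by intro hh; linarith), zero_div] at this
      exact this.mono_left nhdsWithin_le_nhds
    apply squeeze_zero_norm' _ hb
    filter_upwards [self_mem_nhdsWithin] with x (hx : x ∈ Ici 0)
    rcases eq_or_lt_of_le (mem_Ici.mp hx) with h0 | h0
    · rw [← h0]
      have hz : ‖h 0‖ = 0 := by simp [hhdef]
      rw [hz, Real.zero_rpow (show (2:ℝ) - μ ≠ 0 by intro hh; linarith), zero_div]
    · rw [hhdef, Real.norm_eq_abs, abs_div, abs_mul,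
        abs_of_nonneg (Real.rpow_nonneg h0.le _), abs_of_neg (show (1:ℝ) - μ < 0 by linarith)]
      have hle : x ^ ((1:ℝ) - μ) * |Real.exp (-x) - 1| ≤ x ^ ((1:ℝ)-μ) * x :=
        mul_le_mul_of_nonneg_left (exp_sub_one_abs_le h0.le) (Real.rpow_nonneg h0.le _)
      have hx2 : x ^ ((1:ℝ)-μ) * x = x ^ ((2:ℝ) - μ) := by
        rw [show (2:ℝ) - μ = (1 - μ) + 1 by ring, Real.rpow_add h0, Real.rpow_one]
      rw [hx2] at hle
      rw [show -((1:ℝ) - μ) = μ - 1 by ring]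
      gcongr
  have htop : Tendsto h atTop (𝓝 0) := by
    have h1 : Tendsto (fun x : ℝ => x ^ ((1:ℝ) - μ)) atTop (𝓝 0) := by
      have := tendsto_rpow_neg_atTop (show (0:ℝ) < μ - 1 by linarith)
      simpa [show -(μ - 1) = 1 - μ by ring] using this
    have h2 : Tendsto (fun x : ℝ => Real.exp (-x) - 1) atTop (𝓝 (0 - 1)) := by
      exact (Real.tendsto_exp_neg_atTop_nhds_zero).sub_const 1
    have := (h1.mul h2).div_const (1 - μ)
    simpa using this
  have key := integral_Ioi_of_hasDerivAt_of_tendsto hcont hderiv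
    (hgint.sub hφint) htop
  have h00 : h 0 = 0 := by simp [hhdef]
  rw [h00, sub_zero] at key
  rw [integral_sub hgint hφint] at key
  have : ∫ u in Ioi (0:ℝ), u ^ (-μ) * (Real.exp (-u) - 1) = ∫ u in Ioi (0:ℝ), φ u := by
    linarith
  rw [this, hφval]


lemma g_Ioc_bound (μ : ℝ) (hμ1 : 1 < μ) (hμ2 : μ < 2) {l : ℝ} (hl : 0 < l) :
    ‖∫ u in Ioc (0:ℝ) l, u ^ (-μ) * (Real.exp (-u) - 1)‖ ≤ l ^ (2 - μ) / (2 - μ) := by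
  have hint : IntegrableOn (fun u : ℝ => u ^ (1 - μ)) (Ioc 0 l) := by
    have := intervalIntegral.intervalIntegrable_rpow' (a := 0) (b := l) (r := 1 - μ)
      (by linarith)
    rwa [intervalIntegrable_iff_integrableOn_Ioc_of_le hl.le] at this
  have hval : ∫ u in Ioc (0:ℝ) l, u ^ (1 - μ) = l ^ (2 - μ) / (2 - μ) := by
    rw [← intervalIntegral.integral_of_le hl.le,
      integral_rpow (Or.inl (by linarith : (-1:ℝ) < 1 - μ))]
    rw [show (1:ℝ) - μ + 1 = 2 - μ by ring,
      Real.zero_rpow (show (2:ℝ) - μ ≠ 0 by intro hh; linarith), sub_zero]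
  rw [← hval]
  refine norm_integral_le_of_norm_le hint ?_
  filter_upwards [ae_restrict_mem measurableSet_Ioc] with x hx
  have hx0 : 0 < x := hx.1
  rw [Real.norm_eq_abs, abs_mul, abs_of_nonneg (Real.rpow_nonneg hx0.le _)]
  calc x ^ (-μ) * |Real.exp (-x) - 1| ≤ x ^ (-μ) * x :=
        mul_le_mul_of_nonneg_left (exp_sub_one_abs_le hx0.le) (Real.rpow_nonneg hx0.le _)
    _ = x ^ (1 - μ) := by
        rw [show (1 : ℝ) - μ = -μ + 1 by ring, Real.rpow_add hx0, Real.rpow_one]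

end ParetoAux

open ParetoAux in
/-- For `1 < μ < 2`,
`λ^{1-μ} (∫_1^∞ μ s^{-μ} e^{-λ s} ds - μ/(μ-1)) → μ Γ(1-μ)` as `λ → 0⁺`;
that is, `E[s e^{-λ s}] = μ/(μ-1) + μ Γ(1-μ) λ^{μ-1} + o(λ^{μ-1})` for `s` Pareto(μ). -/
theorem pareto_damped_first_moment_expansion (μ : ℝ) (hμ1 : 1 < μ) (hμ2 : μ < 2) :
    Tendsto (fun l : ℝ =>
        l ^ (1 - μ) *
          ((∫ s in Ioi (1 : ℝ), μ * s ^ (-μ) * Real.exp (-l * s)) - μ / (μ - 1)))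
      (𝓝[>] 0) (𝓝 (μ * Real.Gamma (1 - μ))) := by
  set g : ℝ → ℝ := fun u => u ^ (-μ) * (Real.exp (-u) - 1) with hgdef
  have hint2 : IntegrableOn (fun s : ℝ => s ^ (-μ)) (Ioi 1) :=
    integrableOn_Ioi_rpow_of_lt (by linarith : -μ < -1) one_pos
  have hB : ∫ s in Ioi (1:ℝ), s ^ (-μ) = 1 / (μ - 1) := by
    rw [integral_Ioi_rpow_of_lt (by linarith : -μ < -1) one_pos, Real.one_rpow,
      div_eq_div_iff (by linarith) (by linarith)]
    ring
  have hkey : ∀ l : ℝ, 0 < l →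
      l ^ (1 - μ) * ((∫ s in Ioi (1:ℝ), μ * s ^ (-μ) * Real.exp (-l * s)) - μ / (μ - 1))
        = μ * ∫ u in Ioi l, g u := by
    intro l hl
    have hint1 : IntegrableOn (fun s : ℝ => s ^ (-μ) * Real.exp (-l * s)) (Ioi 1) := by
      refine hint2.mono' ?_ ?_
      · refine ContinuousOn.aestronglyMeasurable ?_ measurableSet_Ioi
        exact (continuousOn_id.rpow_const fun x hx =>
            Or.inl (ne_of_gt (lt_trans one_pos hx))).mul
          (Real.continuous_exp.comp (continuous_const.mul continuous_id)).continuousOn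
      · filter_upwards [ae_restrict_mem measurableSet_Ioi] with x hx
        have hx0 : (0:ℝ) < x := lt_trans one_pos hx
        rw [Real.norm_eq_abs, abs_mul, abs_of_nonneg (Real.rpow_nonneg hx0.le _),
          abs_of_nonneg (Real.exp_pos _).le]
        have : Real.exp (-l * x) ≤ 1 := Real.exp_le_one_iff.mpr (by nlinarith)
        calc x ^ (-μ) * Real.exp (-l * x) ≤ x ^ (-μ) * 1 :=
              mul_le_mul_of_nonneg_left this (Real.rpow_nonneg hx0.le _)
          _ = x ^ (-μ) := mul_one _
    have hA : ∫ s in Ioi (1:ℝ), μ * s ^ (-μ) * Real.exp (-l * s)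
        = μ * ∫ s in Ioi (1:ℝ), s ^ (-μ) * Real.exp (-l * s) := by
      simp_rw [mul_assoc]
      exact integral_const_mul μ _
    have hll : l ^ μ * l ^ (-μ) = 1 := by
      rw [← Real.rpow_add hl]; simp
    have e1 : (∫ s in Ioi (1:ℝ), s ^ (-μ) * Real.exp (-l * s)) - ∫ s in Ioi (1:ℝ), s ^ (-μ)
        = ∫ s in Ioi (1:ℝ), (s ^ (-μ) * Real.exp (-l * s) - s ^ (-μ)) :=
      (integral_sub hint1 hint2).symm
    have e2 : ∫ s in Ioi (1:ℝ), (s ^ (-μ) * Real.exp (-l * s) - s ^ (-μ))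
        = ∫ s in Ioi (1:ℝ), l ^ μ * g (l * s) := by
      refine setIntegral_congr_fun measurableSet_Ioi fun s hs => ?_
      have hs0 : (0:ℝ) < s := lt_trans one_pos hs
      have hmul : (l * s) ^ (-μ) = l ^ (-μ) * s ^ (-μ) := Real.mul_rpow hl.le hs0.le
      simp only [hgdef]
      rw [hmul, show -(l * s) = -l * s by ring]
      calc s ^ (-μ) * Real.exp (-l * s) - s ^ (-μ)
          = s ^ (-μ) * (Real.exp (-l * s) - 1) := by ring
        _ = (l ^ μ * l ^ (-μ)) * s ^ (-μ) * (Real.exp (-l * s) - 1) := by rw [hll, one_mul]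
        _ = l ^ μ * (l ^ (-μ) * s ^ (-μ) * (Real.exp (-l * s) - 1)) := by ring
    have e3 : ∫ s in Ioi (1:ℝ), l ^ μ * g (l * s)
        = l ^ μ * (l⁻¹ * ∫ u in Ioi l, g u) := by
      rw [integral_const_mul, integral_comp_mul_left_Ioi g 1 hl, mul_one, smul_eq_mul]
    have hD : (∫ s in Ioi (1:ℝ), s ^ (-μ) * Real.exp (-l * s)) - 1 / (μ - 1)
        = l ^ μ * (l⁻¹ * ∫ u in Ioi l, g u) := by
      rw [← hB, e1, e2, e3]
    have hpow : l ^ (1 - μ) * (l ^ μ * l⁻¹) = 1 := by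
      rw [← Real.rpow_neg_one l, ← Real.rpow_add hl, ← Real.rpow_add hl,
        show (1:ℝ) - μ + (μ + -1) = 0 by ring, Real.rpow_zero]
    rw [hA]
    calc l ^ (1 - μ) * (μ * (∫ s in Ioi (1:ℝ), s ^ (-μ) * Real.exp (-l * s)) - μ / (μ - 1))
        = μ * (l ^ (1 - μ) * ((∫ s in Ioi (1:ℝ), s ^ (-μ) * Real.exp (-l * s)) - 1 / (μ - 1))) := by
          ring
      _ = μ * (l ^ (1 - μ) * (l ^ μ * (l⁻¹ * ∫ u in Ioi l, g u))) := by rw [hD]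
      _ = μ * ((l ^ (1 - μ) * (l ^ μ * l⁻¹)) * ∫ u in Ioi l, g u) := by ring
      _ = μ * ∫ u in Ioi l, g u := by rw [hpow, one_mul]
  have hlim : Tendsto (fun l => ∫ u in Ioi l, g u) (𝓝[>] 0) (𝓝 (Real.Gamma (1 - μ))) := by
    have hb : Tendsto (fun l : ℝ => l ^ ((2:ℝ) - μ) / (2 - μ)) (𝓝[>] 0) (𝓝 0) := by
      have := ((Real.continuousAt_rpow_const 0 (2 - μ)
        (Or.inr (by linarith))).div_const (2 - μ)).tendsto
      rw [Real.zero_rpow (show (2:ℝ) - μ ≠ 0 by intro hh; linarith), zero_div] at this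
      exact this.mono_left nhdsWithin_le_nhds
    have hdiff : Tendsto (fun l => (∫ u in Ioi l, g u) - ∫ u in Ioi (0:ℝ), g u)
        (𝓝[>] 0) (𝓝 0) := by
      apply squeeze_zero_norm' _ hb
      filter_upwards [self_mem_nhdsWithin] with l (hl : l ∈ Ioi 0)
      have hsplit : ∫ u in Ioi (0:ℝ), g u = (∫ u in Ioc (0:ℝ) l, g u) + ∫ u in Ioi l, g u := by
        rw [← setIntegral_union (Ioc_disjoint_Ioi le_rfl) measurableSet_Ioi
          (g_integrableOn_Ioc μ hμ2) (g_integrableOn_Ioi_one μ hμ1 hl),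
          Ioc_union_Ioi_eq_Ioi hl.le]
      rw [hsplit, show (∫ u in Ioi l, g u) - ((∫ u in Ioc (0:ℝ) l, g u) + ∫ u in Ioi l, g u)
        = -(∫ u in Ioc (0:ℝ) l, g u) by ring, norm_neg]
      exact g_Ioc_bound μ hμ1 hμ2 hl
    have := hdiff.add_const (∫ u in Ioi (0:ℝ), g u)
    simp only [sub_add_cancel, zero_add] at this
    rwa [g_integral μ hμ1 hμ2] at this
  refine Tendsto.congr' ?_ (hlim.const_mul μ)
  filter_upwards [self_mem_nhdsWithin] with l (hl : l ∈ Ioi 0)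
  exact (hkey l hl).symm
end

section
/- Let 1 < μ < 2 and let (s_i)_{i≥1} be i.i.d. Pareto(μ) random variables. Then for every λ ≥ 0, lim_{K → ∞} E[ exp( -λ K^{-2/μ} Σ_{i=1}^K s_i² ) ] = exp( -Γ(1-μ/2) λ^{μ/2} ). (Thus K^{-2/μ} Σ_{i=1}^K s_i² converges in distribution to the one-sided μ/2-stable law with Laplace transform exp(-Γ(1-μ/2) t^{μ/2}).) -/
open MeasureTheory ProbabilityTheory Filter Topology Set
open scoped ENNReal NNReal

/-- The Pareto(μ) law on `[1, ∞)`, with density `μ s^{-(1+μ)}` for `s ≥ 1`. -/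
noncomputable def paretoLaw (μ : ℝ) : Measure ℝ :=
  (volume.restrict (Ici (1 : ℝ))).withDensity fun x => ENNReal.ofReal (μ * x ^ (-(1 + μ)))

/-- Elementary limit: if `a n → A` then `(1 - a n / n)^n → exp (-A)`. -/
lemma aux_tendsto_one_sub_div_pow {a : ℕ → ℝ} {A : ℝ} (ha : Tendsto a atTop (𝓝 A)) :
    Tendsto (fun n : ℕ => (1 - a n / n) ^ n) atTop (𝓝 (Real.exp (-A))) := by
  have hx : Tendsto (fun n : ℕ => a n / n) atTop (𝓝 0) := by
    simpa using ha.div_atTop tendsto_natCast_atTop_atTop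
  have hev : ∀ᶠ n : ℕ in atTop, a n / n ∈ Ioo (-(1/2) : ℝ) (1/2) :=
    hx (Ioo_mem_nhds (by norm_num) (by norm_num))
  have hpos : ∀ᶠ n : ℕ in atTop, (0:ℝ) < 1 - a n / n := by
    filter_upwards [hev] with n hn
    have := hn.2; linarith
  -- log bounds
  have hlog : Tendsto (fun n : ℕ => (n : ℝ) * Real.log (1 - a n / n)) atTop (𝓝 (-A)) := by
    have hlow : Tendsto (fun n : ℕ => (-(a n)) / (1 - a n / n)) atTop (𝓝 (-A)) := by
      have h1 : Tendsto (fun n : ℕ => (1:ℝ) - a n / n) atTop (𝓝 1) := by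
        simpa using (tendsto_const_nhds.sub hx)
      have := ha.neg.div h1 one_ne_zero
      rw [div_one] at this
      exact this
    have hup : Tendsto (fun n : ℕ => -(a n)) atTop (𝓝 (-A)) := ha.neg
    refine tendsto_of_tendsto_of_tendsto_of_le_of_le' hlow hup ?_ ?_
    · filter_upwards [hpos, eventually_ge_atTop 1] with n hn hn1
      have hnn : (0:ℝ) < (n:ℝ) := by exact_mod_cast hn1
      set y := 1 - a n / n with hy
      have h2 : -Real.log y ≤ y⁻¹ - 1 := by
        simpa [Real.log_inv] using Real.log_le_sub_one_of_pos (inv_pos.mpr hn)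
      have h4 : y⁻¹ - 1 = (1 - y) / y := by field_simp
      have hlb : (y - 1) / y ≤ Real.log y := by
        have h6 : (y - 1) / y = -((1 - y) / y) := by ring
        rw [h6]; linarith
      have h5 : (n:ℝ) * (y - 1) = -(a n) := by
        rw [hy]; field_simp; ring
      calc (-(a n)) / y = ((n:ℝ) * (y - 1)) / y := by rw [h5]
        _ = (n:ℝ) * ((y - 1) / y) := by ring
        _ ≤ (n:ℝ) * Real.log y := mul_le_mul_of_nonneg_left hlb hnn.le
    · filter_upwards [hpos, eventually_ge_atTop 1] with n hn hn1
      have hnn : (0:ℝ) < (n:ℝ) := by exact_mod_cast hn1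
      have hub : Real.log (1 - a n / n) ≤ -(a n / n) := by
        have := Real.log_le_sub_one_of_pos hn
        linarith
      have h5 : (n:ℝ) * (-(a n / n)) = -(a n) := by field_simp
      calc (n:ℝ) * Real.log (1 - a n / n) ≤ (n:ℝ) * (-(a n / n)) :=
            mul_le_mul_of_nonneg_left hub hnn.le
        _ = -(a n) := h5
  have := (Real.continuous_exp.continuousAt (x := -A)).tendsto.comp hlog
  refine this.congr' ?_
  filter_upwards [hpos] with n hn
  rw [Function.comp_apply, Real.exp_nat_mul, Real.exp_log hn]

namespace ParetoAux

lemma one_sub_exp_neg_le {x : ℝ} : 1 - Real.exp (-x) ≤ x := by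
  have := Real.add_one_le_exp (-x); linarith

lemma one_sub_exp_neg_nonneg {x : ℝ} (hx : 0 ≤ x) : 0 ≤ 1 - Real.exp (-x) := by
  have : Real.exp (-x) ≤ Real.exp 0 := Real.exp_le_exp.mpr (by linarith)
  simp only [Real.exp_zero] at this; linarith

lemma one_sub_exp_neg_le_one {x : ℝ} (hx : 0 ≤ x) : 1 - Real.exp (-x) ≤ 1 := by
  have := Real.exp_pos (-x); linarith

/-- Integrability of `(1 - e^{-y}) y^{-(1+β)}` on `(0,∞)` for `0 < β < 1`. -/
lemma integrableOn_aux {β : ℝ} (hβ0 : 0 < β) (hβ1 : β < 1) :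
    IntegrableOn (fun y => (1 - Real.exp (-y)) * y ^ (-(1+β))) (Ioi (0:ℝ)) := by
  have hmeas : Measurable fun y : ℝ => (1 - Real.exp (-y)) * y ^ (-(1+β)) := by fun_prop
  rw [← Ioc_union_Ioi_eq_Ioi (zero_le_one : (0:ℝ) ≤ 1), integrableOn_union]
  constructor
  · have hbint : IntegrableOn (fun y : ℝ => y ^ (-β)) (Ioc 0 1) :=
      (intervalIntegrable_iff_integrableOn_Ioc_of_le zero_le_one).mp <|
        intervalIntegral.intervalIntegrable_rpow' (by linarith)
    refine Integrable.mono' hbint hmeas.aestronglyMeasurable.restrict ?_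
    filter_upwards [ae_restrict_mem measurableSet_Ioc] with y hy
    have hy0 : 0 < y := hy.1
    rw [Real.norm_eq_abs, abs_of_nonneg (mul_nonneg (one_sub_exp_neg_nonneg hy0.le)
      (Real.rpow_nonneg hy0.le _))]
    calc (1 - Real.exp (-y)) * y ^ (-(1+β)) ≤ y * y ^ (-(1+β)) :=
          mul_le_mul_of_nonneg_right one_sub_exp_neg_le (Real.rpow_nonneg hy0.le _)
      _ = y ^ (-β) := by
          rw [show (-β) = 1 + -(1+β) by ring, Real.rpow_add hy0, Real.rpow_one]
  · have hbint : IntegrableOn (fun y : ℝ => y ^ (-(1+β))) (Ioi 1) :=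
      integrableOn_Ioi_rpow_of_lt (by linarith) zero_lt_one
    refine Integrable.mono' hbint hmeas.aestronglyMeasurable.restrict ?_
    filter_upwards [ae_restrict_mem measurableSet_Ioi] with y hy
    have hy0 : (0:ℝ) < y := lt_trans zero_lt_one hy
    rw [Real.norm_eq_abs, abs_of_nonneg (mul_nonneg (one_sub_exp_neg_nonneg hy0.le)
      (Real.rpow_nonneg hy0.le _))]
    calc (1 - Real.exp (-y)) * y ^ (-(1+β)) ≤ 1 * y ^ (-(1+β)) :=
          mul_le_mul_of_nonneg_right (one_sub_exp_neg_le_one hy0.le) (Real.rpow_nonneg hy0.le _)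
      _ = y ^ (-(1+β)) := one_mul _

/-- `∫_0^∞ (1-e^{-y}) β y^{-(1+β)} dy = Γ(1-β)` for `0 < β < 1`. -/
lemma integral_one_sub_exp_rpow {β : ℝ} (hβ0 : 0 < β) (hβ1 : β < 1) :
    ∫ y in Ioi (0:ℝ), (1 - Real.exp (-y)) * (β * y ^ (-(1+β))) = Real.Gamma (1 - β) := by
  have hA : IntegrableOn (fun y : ℝ => (1 - Real.exp (-y)) * (β * y ^ (-(1+β)))) (Ioi 0) :=
    IntegrableOn.congr_fun ((integrableOn_aux hβ0 hβ1).const_mul β)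
      (fun y _ => by ring) measurableSet_Ioi
  have hB : IntegrableOn (fun y : ℝ => Real.exp (-y) * y ^ (-β)) (Ioi 0) :=
    IntegrableOn.congr_fun (Real.GammaIntegral_convergent (show (0:ℝ) < 1 - β by linarith))
      (fun y _ => by rw [show (1:ℝ) - β - 1 = -β by ring]) measurableSet_Ioi
  have hG : ∫ y in Ioi (0:ℝ), Real.exp (-y) * y ^ (-β) = Real.Gamma (1 - β) := by
    rw [Real.Gamma_eq_integral (show (0:ℝ) < 1 - β by linarith)]
    exact setIntegral_congr_fun measurableSet_Ioi
      (fun y _ => by rw [show (1:ℝ) - β - 1 = -β by ring])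
  have hderiv : ∀ y ∈ Ioi (0:ℝ), HasDerivAt (fun y : ℝ => -((1 - Real.exp (-y)) * y ^ (-β)))
      ((1 - Real.exp (-y)) * (β * y ^ (-(1+β))) - Real.exp (-y) * y ^ (-β)) y := by
    intro y hy
    have hy0 : (0:ℝ) < y := hy
    have h1 : HasDerivAt (fun y : ℝ => 1 - Real.exp (-y)) (Real.exp (-y)) y := by
      have := ((Real.hasDerivAt_exp (-y)).comp y (hasDerivAt_neg y)).const_sub 1
      simpa using this
    have h2 : HasDerivAt (fun y : ℝ => y ^ (-β)) (-β * y ^ (-β - 1)) y :=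
      Real.hasDerivAt_rpow_const (Or.inl hy0.ne')
    have h3 := (h1.mul h2).neg
    have h4 : ((1 - Real.exp (-y)) * (β * y ^ (-(1+β))) - Real.exp (-y) * y ^ (-β))
        = -(Real.exp (-y) * y ^ (-β) + (1 - Real.exp (-y)) * (-β * y ^ (-β - 1))) := by
      rw [show -β - 1 = -(1+β) by ring]
      ring
    rw [h4]; exact h3
  have hcont : ContinuousWithinAt (fun y : ℝ => -((1 - Real.exp (-y)) * y ^ (-β))) (Ici 0) 0 := by
    have hF0 : -((1 - Real.exp (-(0:ℝ))) * (0:ℝ) ^ (-β)) = 0 := by simp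
    rw [ContinuousWithinAt, hF0]
    have hbnd : Tendsto (fun y : ℝ => y ^ (1 - β)) (𝓝[Ici 0] 0) (𝓝 0) := by
      have hc : ContinuousAt (fun y : ℝ => y ^ (1 - β)) 0 :=
        Real.continuousAt_rpow_const 0 (1 - β) (Or.inr (by linarith))
      have := (hc.continuousWithinAt (s := Ici 0)).tendsto
      simpa [Real.zero_rpow (show (1:ℝ) - β ≠ 0 by linarith)] using this
    refine squeeze_zero_norm' ?_ hbnd
    filter_upwards [eventually_mem_nhdsWithin] with y (hy : y ∈ Ici (0:ℝ))
    rcases eq_or_lt_of_le hy.out with h | h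
    · simp [← h, Real.zero_rpow (show (1:ℝ) - β ≠ 0 by linarith)]
    · simp only [norm_neg, Real.norm_eq_abs]
      rw [abs_of_nonneg (mul_nonneg (one_sub_exp_neg_nonneg h.le) (Real.rpow_nonneg h.le _))]
      calc (1 - Real.exp (-y)) * y ^ (-β) ≤ y * y ^ (-β) :=
            mul_le_mul_of_nonneg_right one_sub_exp_neg_le (Real.rpow_nonneg h.le _)
        _ = y ^ (1 - β) := by
            rw [show (1:ℝ) - β = 1 + -β by ring, Real.rpow_add h, Real.rpow_one]
  have htop : Tendsto (fun y : ℝ => -((1 - Real.exp (-y)) * y ^ (-β))) atTop (𝓝 0) := by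
    have h1 : Tendsto (fun y : ℝ => 1 - Real.exp (-y)) atTop (𝓝 1) := by
      have : Tendsto (fun y : ℝ => Real.exp (-y)) atTop (𝓝 0) :=
        Real.tendsto_exp_atBot.comp tendsto_neg_atTop_atBot
      simpa using tendsto_const_nhds.sub this
    have h2 : Tendsto (fun y : ℝ => y ^ (-β)) atTop (𝓝 0) := tendsto_rpow_neg_atTop hβ0
    have := (h1.mul h2).neg
    simpa using this
  have key := integral_Ioi_of_hasDerivAt_of_tendsto hcont hderiv (hA.sub hB) htop
  rw [integral_sub hA hB] at key
  have hF0 : -((1 - Real.exp (-(0:ℝ))) * (0:ℝ) ^ (-β)) = 0 := by simp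
  rw [hF0, sub_zero] at key
  rw [← hG]
  linarith

/-- The integrand `G u = (1-e^{-u²}) p u^{-(1+p)}`. -/
noncomputable def G (p : ℝ) (u : ℝ) : ℝ := (1 - Real.exp (-u^2)) * (p * u ^ (-(1+p)))

lemma integrableOn_G {p : ℝ} (hp1 : 1 < p) (hp2 : p < 2) :
    IntegrableOn (G p) (Ioi (0:ℝ)) := by
  have hmeas : Measurable (G p) := by unfold G; fun_prop
  rw [← Ioc_union_Ioi_eq_Ioi (zero_le_one : (0:ℝ) ≤ 1), integrableOn_union]
  constructor
  · have hbint : IntegrableOn (fun u : ℝ => p * u ^ (1 - p)) (Ioc 0 1) :=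
      (((intervalIntegrable_iff_integrableOn_Ioc_of_le
        zero_le_one).mp (intervalIntegral.intervalIntegrable_rpow' (by linarith))).const_mul p)
    refine Integrable.mono' hbint hmeas.aestronglyMeasurable.restrict ?_
    filter_upwards [ae_restrict_mem measurableSet_Ioc] with u hu
    have hu0 : 0 < u := hu.1
    have hsq : (0:ℝ) ≤ u^2 := sq_nonneg u
    unfold G
    rw [Real.norm_eq_abs, abs_of_nonneg (mul_nonneg (one_sub_exp_neg_nonneg hsq)
      (mul_nonneg (by linarith) (Real.rpow_nonneg hu0.le _)))]
    calc (1 - Real.exp (-u^2)) * (p * u ^ (-(1+p))) ≤ u^2 * (p * u ^ (-(1+p))) :=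
          mul_le_mul_of_nonneg_right one_sub_exp_neg_le
            (mul_nonneg (by linarith) (Real.rpow_nonneg hu0.le _))
      _ = p * u ^ (1 - p) := by
          rw [show (1:ℝ) - p = 2 + -(1+p) by ring, Real.rpow_add hu0,
            show ((2:ℝ)) = ((2:ℕ):ℝ) by norm_num, Real.rpow_natCast]
          ring
  · have hbint : IntegrableOn (fun u : ℝ => p * u ^ (-(1+p))) (Ioi 1) :=
      (integrableOn_Ioi_rpow_of_lt (by linarith) zero_lt_one).const_mul p
    refine Integrable.mono' hbint hmeas.aestronglyMeasurable.restrict ?_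
    filter_upwards [ae_restrict_mem measurableSet_Ioi] with u hu
    have hu0 : (0:ℝ) < u := lt_trans zero_lt_one hu
    have hsq : (0:ℝ) ≤ u^2 := sq_nonneg u
    unfold G
    rw [Real.norm_eq_abs, abs_of_nonneg (mul_nonneg (one_sub_exp_neg_nonneg hsq)
      (mul_nonneg (by linarith) (Real.rpow_nonneg hu0.le _)))]
    calc (1 - Real.exp (-u^2)) * (p * u ^ (-(1+p))) ≤ 1 * (p * u ^ (-(1+p))) :=
          mul_le_mul_of_nonneg_right (one_sub_exp_neg_le_one hsq)
            (mul_nonneg (by linarith) (Real.rpow_nonneg hu0.le _))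
      _ = p * u ^ (-(1+p)) := one_mul _

/-- Substitution `y = u²`: the full integral of `G` equals `Γ(1 - p/2)`. -/
lemma integral_G {p : ℝ} (hp1 : 1 < p) (hp2 : p < 2) :
    ∫ u in Ioi (0:ℝ), G p u = Real.Gamma (1 - p/2) := by
  rw [← integral_one_sub_exp_rpow (show (0:ℝ) < p/2 by linarith) (by linarith)]
  rw [← MeasureTheory.integral_comp_rpow_Ioi_of_pos
    (g := fun y => (1 - Real.exp (-y)) * (p/2 * y ^ (-(1+p/2)))) (two_pos)]
  refine setIntegral_congr_fun measurableSet_Ioi (fun u hu => ?_)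
  have hu0 : (0:ℝ) < u := hu
  have h2 : u ^ ((2:ℝ)) = u ^ 2 := by
    rw [show ((2:ℝ)) = ((2:ℕ):ℝ) by norm_num, Real.rpow_natCast]
  have h3 : (u ^ ((2:ℝ))) ^ (-(1+p/2)) = u ^ (-(2+p)) := by
    rw [← Real.rpow_mul hu0.le]
    congr 1; ring
  unfold G
  rw [smul_eq_mul, h3, h2]
  rw [show ((2:ℝ)) - 1 = 1 by norm_num, Real.rpow_one]
  rw [show -(1+p) = 1 + -(2+p) by ring, Real.rpow_add hu0, Real.rpow_one]
  ring

lemma G_nonneg {p : ℝ} (hp1 : 1 < p) {u : ℝ} (hu : 0 < u) : 0 ≤ G p u :=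
  mul_nonneg (one_sub_exp_neg_nonneg (sq_nonneg u))
    (mul_nonneg (by linarith) (Real.rpow_nonneg hu.le _))

/-- Tail bound near zero. -/
lemma tail_bound {p : ℝ} (hp1 : 1 < p) (hp2 : p < 2) {ε : ℝ} (hε : 0 < ε) :
    ‖∫ u in Ioc (0:ℝ) ε, G p u‖ ≤ p/(2-p) * ε ^ (2-p) := by
  have hbint : IntegrableOn (fun u : ℝ => p * u ^ (1 - p)) (Ioc 0 ε) :=
    ((intervalIntegrable_iff_integrableOn_Ioc_of_le hε.le).mp
      (intervalIntegral.intervalIntegrable_rpow' (by linarith))).const_mul p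
  have hGint : IntegrableOn (G p) (Ioc 0 ε) :=
    (integrableOn_G hp1 hp2).mono_set (fun u hu => hu.1)
  have hnn : 0 ≤ ∫ u in Ioc (0:ℝ) ε, G p u := by
    refine setIntegral_nonneg measurableSet_Ioc (fun u hu => G_nonneg hp1 hu.1)
  rw [Real.norm_eq_abs, abs_of_nonneg hnn]
  have hmono : ∫ u in Ioc (0:ℝ) ε, G p u ≤ ∫ u in Ioc (0:ℝ) ε, p * u ^ (1 - p) := by
    refine setIntegral_mono_on hGint hbint measurableSet_Ioc (fun u hu => ?_)
    have hu0 : 0 < u := hu.1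
    unfold G
    calc (1 - Real.exp (-u^2)) * (p * u ^ (-(1+p))) ≤ u^2 * (p * u ^ (-(1+p))) :=
          mul_le_mul_of_nonneg_right one_sub_exp_neg_le
            (mul_nonneg (by linarith) (Real.rpow_nonneg hu0.le _))
      _ = p * u ^ (1 - p) := by
          rw [show (1:ℝ) - p = 2 + -(1+p) by ring, Real.rpow_add hu0,
            show ((2:ℝ)) = ((2:ℕ):ℝ) by norm_num, Real.rpow_natCast]
          ring
  have hval : ∫ u in Ioc (0:ℝ) ε, p * u ^ (1 - p) = p/(2-p) * ε ^ (2-p) := by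
    rw [← intervalIntegral.integral_of_le hε.le, intervalIntegral.integral_const_mul,
      integral_rpow (Or.inl (by linarith : (-1:ℝ) < 1 - p))]
    rw [show (1:ℝ) - p + 1 = 2 - p by ring,
      Real.zero_rpow (show (2:ℝ) - p ≠ 0 by intro h; linarith [h])]
    field_simp
    simp
  linarith

/-- Splitting the integral at `ε`. -/
lemma split_at {p : ℝ} (hp1 : 1 < p) (hp2 : p < 2) {ε : ℝ} (hε : 0 < ε) :
    ∫ u in Ioi ε, G p u = Real.Gamma (1 - p/2) - ∫ u in Ioc (0:ℝ) ε, G p u := by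
  have h1 : Ioc (0:ℝ) ε ∪ Ioi ε = Ioi 0 := Ioc_union_Ioi_eq_Ioi hε.le
  have h2 := setIntegral_union (Ioc_disjoint_Ioi (le_refl ε)) measurableSet_Ioi
    ((integrableOn_G hp1 hp2).mono_set (by rw [← h1]; exact subset_union_left))
    ((integrableOn_G hp1 hp2).mono_set (by rw [← h1]; exact subset_union_right))
  rw [h1, integral_G hp1 hp2] at h2
  linarith

/-- Scaling: `∫_1^∞ (1-e^{-t x²}) p x^{-(1+p)} dx = t^{p/2} ∫_{√t}^∞ G`. -/
lemma scaling {p : ℝ} (hp1 : 1 < p) (hp2 : p < 2) {t : ℝ} (ht : 0 < t) :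
    ∫ x in Ioi (1:ℝ), (1 - Real.exp (-(t * x^2))) * (p * x ^ (-(1+p)))
      = t ^ (p/2) * ∫ u in Ioi (Real.sqrt t), G p u := by
  set r := Real.sqrt t with hr
  have hr0 : 0 < r := Real.sqrt_pos.mpr ht
  have hr2 : r^2 = t := Real.sq_sqrt ht.le
  have hcv := MeasureTheory.integral_comp_mul_left_Ioi (G p) 1 hr0
  rw [mul_one] at hcv
  have hpt : ∀ x ∈ Ioi (1:ℝ), G p (r * x)
      = r ^ (-(1+p)) * ((1 - Real.exp (-(t * x^2))) * (p * x ^ (-(1+p)))) := by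
    intro x hx
    have hx0 : (0:ℝ) < x := lt_trans zero_lt_one hx
    unfold G
    rw [mul_pow, hr2, Real.mul_rpow hr0.le hx0.le]
    ring
  have h2 : ∫ x in Ioi (1:ℝ), G p (r * x)
      = r ^ (-(1+p)) * ∫ x in Ioi (1:ℝ), (1 - Real.exp (-(t * x^2))) * (p * x ^ (-(1+p))) := by
    rw [← integral_const_mul]
    exact setIntegral_congr_fun measurableSet_Ioi hpt
  rw [h2, smul_eq_mul] at hcv
  have hrpow_pos : (0:ℝ) < r ^ (-(1+p)) := Real.rpow_pos_of_pos hr0 _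
  have hmain : ∫ x in Ioi (1:ℝ), (1 - Real.exp (-(t * x^2))) * (p * x ^ (-(1+p)))
      = (r ^ (-(1+p)))⁻¹ * (r⁻¹ * ∫ u in Ioi r, G p u) := by
    rw [← hcv, ← mul_assoc, inv_mul_cancel₀ hrpow_pos.ne', one_mul]
  have hkey : (r ^ (-(1+p)))⁻¹ * r⁻¹ = t ^ (p/2) := by
    rw [← Real.rpow_neg hr0.le, ← Real.rpow_neg_one r, ← Real.rpow_add hr0]
    rw [hr, Real.sqrt_eq_rpow, ← Real.rpow_mul ht.le]
    congr 1
    ring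
  rw [hmain, ← mul_assoc, hkey]

lemma density_integrableOn {p : ℝ} (hp1 : 1 < p) :
    IntegrableOn (fun x : ℝ => p * x ^ (-(1+p))) (Ioi (1:ℝ)) :=
  (integrableOn_Ioi_rpow_of_lt (by linarith) zero_lt_one).const_mul p

lemma density_norm {p : ℝ} (hp1 : 1 < p) :
    ∫ x in Ioi (1:ℝ), p * x ^ (-(1+p)) = 1 := by
  rw [integral_const_mul, integral_Ioi_rpow_of_lt (by linarith : -(1+p) < -1) zero_lt_one]
  rw [Real.one_rpow]
  field_simp
  rw [show -(1+p)+1 = -p by ring, div_neg, neg_neg, div_self (by linarith)]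

/-- The Laplace transform of `x ↦ x²` under the density on `Ioi 1`. -/
lemma laplace_formula {p : ℝ} (hp1 : 1 < p) (hp2 : p < 2) {t : ℝ} (ht : 0 < t) :
    ∫ x in Ioi (1:ℝ), (p * x ^ (-(1+p))) * Real.exp (-(t * x^2))
      = 1 - t ^ (p/2) * ∫ u in Ioi (Real.sqrt t), G p u := by
  have hD := density_integrableOn hp1
  have hmeas : Measurable fun x : ℝ => (p * x ^ (-(1+p))) * (1 - Real.exp (-(t * x^2))) := by
    fun_prop
  have hI : IntegrableOn (fun x : ℝ => (p * x ^ (-(1+p))) * (1 - Real.exp (-(t * x^2))))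
      (Ioi (1:ℝ)) := by
    refine Integrable.mono' hD hmeas.aestronglyMeasurable.restrict ?_
    filter_upwards [ae_restrict_mem measurableSet_Ioi] with x hx
    have hx0 : (0:ℝ) < x := lt_trans zero_lt_one hx
    have hsq : (0:ℝ) ≤ t * x^2 := mul_nonneg ht.le (sq_nonneg x)
    have hd0 : (0:ℝ) ≤ p * x ^ (-(1+p)) := mul_nonneg (by linarith) (Real.rpow_nonneg hx0.le _)
    rw [Real.norm_eq_abs, abs_of_nonneg (mul_nonneg hd0 (one_sub_exp_neg_nonneg hsq))]
    calc (p * x ^ (-(1+p))) * (1 - Real.exp (-(t * x^2))) ≤ (p * x ^ (-(1+p))) * 1 :=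
          mul_le_mul_of_nonneg_left (one_sub_exp_neg_le_one hsq) hd0
      _ = p * x ^ (-(1+p)) := mul_one _
  have hsplit : ∀ x : ℝ, (p * x ^ (-(1+p))) * Real.exp (-(t * x^2))
      = p * x ^ (-(1+p)) - (p * x ^ (-(1+p))) * (1 - Real.exp (-(t * x^2))) := by
    intro x; ring
  rw [integral_congr_ae (Eventually.of_forall (fun x => hsplit x))]
  rw [integral_sub hD hI, density_norm hp1]
  have h2 : ∫ x in Ioi (1:ℝ), (p * x ^ (-(1+p))) * (1 - Real.exp (-(t * x^2)))
      = ∫ x in Ioi (1:ℝ), (1 - Real.exp (-(t * x^2))) * (p * x ^ (-(1+p))) :=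
    integral_congr_ae (Eventually.of_forall (fun x => mul_comm _ _))
  rw [h2, scaling hp1 hp2 ht]


lemma integral_paretoLaw {p : ℝ} (hp1 : 1 < p) (f : ℝ → ℝ) (hf : Measurable f) :
    ∫ x, f x ∂(paretoLaw p) = ∫ x in Ici (1:ℝ), (p * x ^ (-(1+p))) * f x := by
  unfold paretoLaw
  have hd : Measurable fun x : ℝ => (p * x ^ (-(1+p))).toNNReal := by fun_prop
  rw [show (fun x : ℝ => ENNReal.ofReal (p * x ^ (-(1+p))))
      = fun x => ((p * x ^ (-(1+p))).toNNReal : ℝ≥0∞) from rfl]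
  rw [integral_withDensity_eq_integral_smul hd f]
  refine integral_congr_ae ?_
  filter_upwards [ae_restrict_mem measurableSet_Ici] with x hx
  have hx0 : (0:ℝ) < x := lt_of_lt_of_le zero_lt_one hx
  have hd0 : (0:ℝ) ≤ p * x ^ (-(1+p)) := mul_nonneg (by linarith) (Real.rpow_nonneg hx0.le _)
  rw [NNReal.smul_def, Real.coe_toNNReal _ hd0, smul_eq_mul]

lemma pareto_laplace {p : ℝ} (hp1 : 1 < p) (hp2 : p < 2) {t : ℝ} (ht : 0 < t) :
    ∫ x, Real.exp (-(t * x^2)) ∂(paretoLaw p)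
      = 1 - t ^ (p/2) * ∫ u in Ioi (Real.sqrt t), G p u := by
  rw [integral_paretoLaw hp1 _ (by fun_prop), integral_Ici_eq_integral_Ioi,
    laplace_formula hp1 hp2 ht]

end ParetoAux


/-- For `1 < μ < 2` and i.i.d. Pareto(μ) variables `s_i`, for every `λ ≥ 0`,
`E[exp(-λ K^{-2/μ} Σ_{i=1}^K s_i²)] → exp(-Γ(1-μ/2) λ^{μ/2})` as `K → ∞`:
the rescaled sum of squares converges to a one-sided `μ/2`-stable law. -/
theorem sum_of_squares_stable_limit
    {Ω : Type*} [MeasureSpace Ω] [IsProbabilityMeasure (ℙ : Measure Ω)]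
    (μ : ℝ) (hμ1 : 1 < μ) (hμ2 : μ < 2)
    (s : ℕ → Ω → ℝ) (hmeas : ∀ i, Measurable (s i))
    (hindep : iIndepFun s ℙ)
    (hdist : ∀ i, Measure.map (s i) ℙ = paretoLaw μ)
    (l : ℝ) (hl : 0 ≤ l) :
    Tendsto (fun K : ℕ =>
        ∫ ω, Real.exp (-l * (K : ℝ) ^ (-(2 / μ)) * ∑ i ∈ Finset.range K, (s i ω) ^ 2) ∂ℙ)
      atTop
      (𝓝 (Real.exp (-Real.Gamma (1 - μ / 2) * l ^ (μ / 2)))) := by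
  classical
  open ParetoAux in
  have hμ0 : (0:ℝ) < μ := lt_trans zero_lt_one hμ1
  rcases eq_or_lt_of_le hl with rfl | hl0
  · -- trivial case l = 0
    have h1 : ∀ K : ℕ, (∫ ω, Real.exp (-(0:ℝ) * (K : ℝ) ^ (-(2 / μ))
        * ∑ i ∈ Finset.range K, (s i ω) ^ 2) ∂ℙ) = 1 := by
      intro K
      simp
    rw [Real.zero_rpow (show μ/2 ≠ 0 by positivity), mul_zero, Real.exp_zero]
    refine Tendsto.congr (fun K => (h1 K).symm) tendsto_const_nhds
  · set t : ℕ → ℝ := fun K => l * (K:ℝ) ^ (-(2/μ)) with ht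
    set X : ℕ → Ω → ℝ := fun i ω => s i ω ^ 2 with hX
    have hXmeas : ∀ i, Measurable (X i) := fun i => (hmeas i).pow_const 2
    have hindep2 : iIndepFun X ℙ :=
      hindep.comp (fun _ x => x ^ 2) (fun _ => measurable_id.pow_const 2)
    -- product formula
    have hprod : ∀ K : ℕ, (∫ ω, Real.exp (-l * (K : ℝ) ^ (-(2 / μ))
          * ∑ i ∈ Finset.range K, (s i ω) ^ 2) ∂ℙ)
        = ∏ i ∈ Finset.range K, mgf (X i) ℙ (-(t K)) := by
      intro K
      have hfun : (fun ω => Real.exp (-l * (K:ℝ) ^ (-(2/μ)) * ∑ i ∈ Finset.range K, (s i ω)^2))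
          = fun ω => Real.exp (-(t K) * (∑ i ∈ Finset.range K, X i) ω) := by
        funext ω
        congr 1
        rw [Finset.sum_apply]
        simp only [hX, ht]
        ring
      rw [hfun]
      exact ProbabilityTheory.iIndepFun.mgf_sum hindep2 hXmeas (Finset.range K)
    -- value of each factor
    have hval : ∀ (i : ℕ) (c : ℝ), 0 < c → mgf (X i) ℙ (-c)
        = 1 - c ^ (μ/2) * ∫ u in Ioi (Real.sqrt c), G μ u := by
      intro i c hc
      have h1 : mgf (X i) ℙ (-c) = ∫ ω, Real.exp (-(c * (s i ω)^2)) ∂ℙ := by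
        unfold mgf
        refine integral_congr_ae (Eventually.of_forall (fun ω => ?_))
        simp only [hX]
        ring_nf
      have h2 : (∫ x, Real.exp (-(c * x^2)) ∂(Measure.map (s i) ℙ))
          = ∫ ω, Real.exp (-(c * (s i ω)^2)) ∂ℙ :=
        integral_map (hmeas i).aemeasurable
          ((by fun_prop : Measurable fun x : ℝ => Real.exp (-(c * x^2)))).aestronglyMeasurable
      rw [h1, ← h2, hdist i, pareto_laplace hμ1 hμ2 hc]
    -- t K is positive and tends to 0
    have htK0 : Tendsto t atTop (𝓝 0) := by
      have h3 : Tendsto (fun K : ℕ => ((K:ℝ)) ^ (-(2/μ))) atTop (𝓝 0) :=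
        (tendsto_rpow_neg_atTop (by positivity)).comp tendsto_natCast_atTop_atTop
      have := h3.const_mul l
      simpa [ht] using this
    have hsqrt : Tendsto (fun K => Real.sqrt (t K)) atTop (𝓝 0) := by
      have := (Real.continuous_sqrt.tendsto 0).comp htK0
      rw [Real.sqrt_zero] at this
      exact this
    have htKpos : ∀ K : ℕ, 1 ≤ K → 0 < t K := by
      intro K hK
      have hK0 : (0:ℝ) < K := by exact_mod_cast hK
      exact mul_pos hl0 (Real.rpow_pos_of_pos hK0 _)
    -- tail limit
    have hbound : Tendsto (fun K => μ/(2-μ) * (Real.sqrt (t K)) ^ (2-μ)) atTop (𝓝 0) := by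
      have hc : ContinuousAt (fun y : ℝ => y ^ (2-μ)) 0 :=
        Real.continuousAt_rpow_const 0 _ (Or.inr (by linarith))
      have h4 := hc.tendsto.comp hsqrt
      rw [Real.zero_rpow (show (2:ℝ)-μ ≠ 0 by intro h; linarith)] at h4
      have := h4.const_mul (μ/(2-μ))
      simpa using this
    have htail : Tendsto (fun K => ∫ u in Ioi (Real.sqrt (t K)), G μ u) atTop
        (𝓝 (Real.Gamma (1 - μ/2))) := by
      have h0 : Tendsto (fun K => ∫ u in Ioc (0:ℝ) (Real.sqrt (t K)), G μ u) atTop (𝓝 0) := by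
        refine squeeze_zero_norm' ?_ hbound
        filter_upwards [eventually_ge_atTop 1] with K hK
        exact tail_bound hμ1 hμ2 (Real.sqrt_pos.mpr (htKpos K hK))
      have h5 : Tendsto (fun K => Real.Gamma (1-μ/2)
          - ∫ u in Ioc (0:ℝ) (Real.sqrt (t K)), G μ u) atTop (𝓝 (Real.Gamma (1-μ/2) - 0)) :=
        tendsto_const_nhds.sub h0
      rw [sub_zero] at h5
      refine h5.congr' ?_
      filter_upwards [eventually_ge_atTop 1] with K hK
      exact (split_at hμ1 hμ2 (Real.sqrt_pos.mpr (htKpos K hK))).symm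
    -- rescaling of t K
    have hts : ∀ K : ℕ, 1 ≤ K → (t K) ^ (μ/2) = l ^ (μ/2) / K := by
      intro K hK
      have hK0 : (0:ℝ) < K := by exact_mod_cast hK
      rw [ht]
      simp only
      rw [Real.mul_rpow hl0.le (Real.rpow_nonneg hK0.le _), ← Real.rpow_mul hK0.le,
        show -(2/μ) * (μ/2) = -1 by field_simp, Real.rpow_neg_one]
      field_simp
    -- conclusion
    have haT : Tendsto (fun K => l ^ (μ/2) * ∫ u in Ioi (Real.sqrt (t K)), G μ u) atTop
        (𝓝 (l^(μ/2) * Real.Gamma (1-μ/2))) := htail.const_mul _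
    have hfinal := aux_tendsto_one_sub_div_pow haT
    rw [show -Real.Gamma (1-μ/2) * l^(μ/2) = -(l^(μ/2) * Real.Gamma (1-μ/2)) by ring]
    refine hfinal.congr' ?_
    filter_upwards [eventually_ge_atTop 1] with K hK
    rw [hprod K]
    rw [Finset.prod_congr rfl (fun i _ => hval i (t K) (htKpos K hK))]
    rw [Finset.prod_const, Finset.card_range, hts K hK]
    congr 1
    ring
end

section
/- Let 1 < μ < 2 and let H_K be the Herfindahl–Hirschman index of K i.i.d. Pareto(μ) sub-unit sizes. Then log H_K / log K converges in probability to 2(1-μ)/μ as K → ∞; that is, for every ε > 0, lim_{K → ∞} P( | log H_K / log K - 2(1-μ)/μ | > ε ) = 0. (The typical value of the Herfindahl index scales as K^{2(1-μ)/μ}, a much slower decay than the 1/K obtained when sub-unit sizes have finite variance.) -/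
open MeasureTheory ProbabilityTheory Filter Topology Set

lemma pareto_lint_rpow {μ : ℝ} (hμ : 0 < μ) {β c : ℝ} (hβ : β < μ) (hc : 1 ≤ c) :
    ∫⁻ x in Ici c, ENNReal.ofReal (μ * x ^ (-(1 + μ))) * ENNReal.ofReal (x ^ β)
      = ENNReal.ofReal (μ / (μ - β) * c ^ (β - μ)) := by
  have hc0 : (0:ℝ) < c := lt_of_lt_of_le one_pos hc
  have hmem : Ioi c =ᵐ[volume] Ici c := Ioi_ae_eq_Ici
  rw [← setLIntegral_congr hmem]
  have hp : β - (1 + μ) < -1 := by linarith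
  have heq : ∀ x ∈ Ioi c,
      ENNReal.ofReal (μ * x ^ (-(1 + μ))) * ENNReal.ofReal (x ^ β)
        = ENNReal.ofReal μ * ENNReal.ofReal (x ^ (β - (1 + μ))) := by
    intro x hx
    have hx0 : (0:ℝ) < x := lt_trans hc0 hx
    rw [ENNReal.ofReal_mul hμ.le, mul_assoc, ← ENNReal.ofReal_mul (Real.rpow_nonneg hx0.le _),
      ← Real.rpow_add hx0]
    ring_nf
  rw [setLIntegral_congr_fun measurableSet_Ioi heq,
    lintegral_const_mul' _ _ ENNReal.ofReal_ne_top,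
    ← ofReal_integral_eq_lintegral_ofReal (integrableOn_Ioi_rpow_of_lt hp hc0)
      ((ae_restrict_mem measurableSet_Ioi).mono fun x hx =>
        Real.rpow_nonneg (le_of_lt (lt_trans hc0 hx)) _)]
  rw [integral_Ioi_rpow_of_lt hp hc0, ← ENNReal.ofReal_mul hμ.le]
  congr 1
  have h1 : β - (1 + μ) + 1 = β - μ := by ring
  rw [h1]
  rw [neg_div, div_eq_mul_inv, div_eq_mul_inv]
  have h2 : (β - μ)⁻¹ = -(μ - β)⁻¹ := by
    rw [← inv_neg, neg_sub]
  rw [h2]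
  ring

lemma pareto_dens_meas (μ : ℝ) :
    Measurable (fun x : ℝ => ENNReal.ofReal (μ * x ^ (-(1 + μ)))) :=
  ((measurable_id.pow_const _ |>.const_mul μ)).ennreal_ofReal |>.mono le_rfl le_rfl

lemma pareto_apply_Ici {μ : ℝ} (hμ : 0 < μ) {t : ℝ} (ht : 1 ≤ t) :
    paretoLaw μ (Ici t) = ENNReal.ofReal (t ^ (-μ)) := by
  rw [paretoLaw, withDensity_apply _ measurableSet_Ici, Measure.restrict_restrict measurableSet_Ici,
    Ici_inter_Ici, max_eq_left ht]
  have : ∀ x ∈ Ici t, ENNReal.ofReal (μ * x ^ (-(1 + μ)))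
      = ENNReal.ofReal (μ * x ^ (-(1 + μ))) * ENNReal.ofReal (x ^ (0:ℝ)) := by
    intro x _; rw [Real.rpow_zero, ENNReal.ofReal_one, mul_one]
  rw [setLIntegral_congr_fun measurableSet_Ici this,
    pareto_lint_rpow hμ hμ ht]
  rw [zero_sub, sub_zero, div_self hμ.ne', one_mul]

lemma pareto_singleton {μ : ℝ} (t : ℝ) : paretoLaw μ {t} = 0 := by
  rw [paretoLaw, withDensity_apply _ (measurableSet_singleton t)]
  refine setLIntegral_measure_zero _ _ ?_
  rw [Measure.restrict_apply (measurableSet_singleton t)]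
  exact measure_mono_null (inter_subset_left) (measure_singleton t)

lemma pareto_apply_Ioi {μ : ℝ} (hμ : 0 < μ) {t : ℝ} (ht : 1 ≤ t) :
    paretoLaw μ (Ioi t) = ENNReal.ofReal (t ^ (-μ)) := by
  rw [← pareto_apply_Ici hμ ht]
  exact measure_congr (Ioi_ae_eq_Ici' (pareto_singleton t))

lemma pareto_apply_Iio {μ : ℝ} (t : ℝ) (ht : t ≤ 1) : paretoLaw μ (Iio t) = 0 := by
  rw [paretoLaw, withDensity_apply _ measurableSet_Iio]
  refine setLIntegral_measure_zero _ _ ?_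
  rw [Measure.restrict_apply measurableSet_Iio]
  have : Iio t ∩ Ici 1 = ∅ := by
    ext x; simp only [mem_inter_iff, mem_Iio, mem_Ici, mem_empty_iff_false, iff_false]
    rintro ⟨h1, h2⟩; linarith
  simp [this]

lemma pareto_prob {μ : ℝ} (hμ : 0 < μ) : IsProbabilityMeasure (paretoLaw μ) := by
  constructor
  have h : (univ : Set ℝ) = Iio 1 ∪ Ici 1 := (Iio_union_Ici).symm
  rw [h, measure_union (Iio_disjoint_Ici le_rfl) measurableSet_Ici,
    pareto_apply_Iio _ le_rfl, pareto_apply_Ici hμ le_rfl, zero_add,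
    Real.one_rpow, ENNReal.ofReal_one]


lemma pareto_apply_Iic {μ : ℝ} (hμ : 0 < μ) {t : ℝ} (ht : 1 ≤ t) :
    paretoLaw μ (Iic t) = ENNReal.ofReal (1 - t ^ (-μ)) := by
  have hprob := pareto_prob hμ
  have h : Iic t = (Ioi t)ᶜ := by simp
  rw [h, measure_compl measurableSet_Ioi (measure_ne_top _ _), pareto_apply_Ioi hμ ht,
    measure_univ, ← ENNReal.ofReal_one, ← ENNReal.ofReal_sub _ (Real.rpow_nonneg (by linarith) _)]

lemma pareto_mean {μ : ℝ} (hμ1 : 1 < μ) :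
    ∫⁻ x, ENNReal.ofReal x ∂(paretoLaw μ) = ENNReal.ofReal (μ / (μ - 1)) := by
  rw [paretoLaw, lintegral_withDensity_eq_lintegral_mul _ (pareto_dens_meas μ)
    (by fun_prop : Measurable fun x : ℝ => ENNReal.ofReal x)]
  simp only [Pi.mul_apply]
  have : ∀ x ∈ Ici (1:ℝ),
      (fun x => ENNReal.ofReal (μ * x ^ (-(1 + μ))) * ENNReal.ofReal x) x
        = ENNReal.ofReal (μ * x ^ (-(1 + μ))) * ENNReal.ofReal (x ^ (1:ℝ)) := by
    intro x _; rw [Real.rpow_one]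
  rw [setLIntegral_congr_fun measurableSet_Ici this,
    pareto_lint_rpow (by linarith) hμ1 le_rfl, Real.one_rpow, mul_one]

lemma pareto_ae_one_le {μ : ℝ} : ∀ᵐ x ∂(paretoLaw μ), 1 ≤ x := by
  have h : ∀ᵐ x ∂(volume.restrict (Ici (1:ℝ))), 1 ≤ x := ae_restrict_mem measurableSet_Ici
  exact h.filter_mono (withDensity_absolutelyContinuous _ _).ae_le

lemma pareto_min_sq {μ γ T : ℝ} (hμ : 0 < μ) (hγ0 : 0 < γ) (hγμ : γ < μ) (hγ2 : γ ≤ 2)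
    (hT : 1 ≤ T) :
    ∫⁻ x, ENNReal.ofReal (min x T ^ 2) ∂(paretoLaw μ)
      ≤ ENNReal.ofReal (T ^ (2 - γ)) * ENNReal.ofReal (μ / (μ - γ)) := by
  rw [paretoLaw, lintegral_withDensity_eq_lintegral_mul _ (pareto_dens_meas μ)
    (by fun_prop : Measurable fun x : ℝ => ENNReal.ofReal (min x T ^ 2))]
  simp only [Pi.mul_apply]
  have hle : ∀ x ∈ Ici (1:ℝ),
      (fun x => ENNReal.ofReal (μ * x ^ (-(1 + μ))) * ENNReal.ofReal (min x T ^ 2)) x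
        ≤ ENNReal.ofReal (T ^ (2 - γ)) *
            (ENNReal.ofReal (μ * x ^ (-(1 + μ))) * ENNReal.ofReal (x ^ γ)) := by
    intro x hx
    have hx1 : (1:ℝ) ≤ x := hx
    have hm1 : (1:ℝ) ≤ min x T := le_min hx1 hT
    have hm0 : (0:ℝ) ≤ min x T := by linarith
    have key : min x T ^ 2 ≤ T ^ (2 - γ) * x ^ γ := by
      have h1 : min x T ^ 2 = min x T ^ ((2:ℕ):ℝ) := (Real.rpow_natCast _ 2).symm
      have h2 : min x T ^ ((2:ℕ):ℝ) = min x T ^ (2 - γ) * min x T ^ γ := by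
        rw [← Real.rpow_add (by linarith)]; norm_num
      have h3 : min x T ^ (2 - γ) ≤ T ^ (2 - γ) :=
        Real.rpow_le_rpow hm0 (min_le_right _ _) (by linarith)
      have h4 : min x T ^ γ ≤ x ^ γ :=
        Real.rpow_le_rpow hm0 (min_le_left _ _) hγ0.le
      calc min x T ^ 2 = min x T ^ (2 - γ) * min x T ^ γ := by rw [h1, h2]
        _ ≤ T ^ (2 - γ) * x ^ γ :=
            mul_le_mul h3 h4 (Real.rpow_nonneg hm0 _) (Real.rpow_nonneg (by linarith) _)
    calc ENNReal.ofReal (μ * x ^ (-(1 + μ))) * ENNReal.ofReal (min x T ^ 2)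
        ≤ ENNReal.ofReal (μ * x ^ (-(1 + μ))) * ENNReal.ofReal (T ^ (2 - γ) * x ^ γ) :=
          mul_le_mul_right (ENNReal.ofReal_le_ofReal key) _
      _ = ENNReal.ofReal (T ^ (2 - γ)) *
            (ENNReal.ofReal (μ * x ^ (-(1 + μ))) * ENNReal.ofReal (x ^ γ)) := by
          rw [ENNReal.ofReal_mul (Real.rpow_nonneg (by linarith) _)]; ring
  calc ∫⁻ x in Ici (1:ℝ), ENNReal.ofReal (μ * x ^ (-(1 + μ))) * ENNReal.ofReal (min x T ^ 2)
      ≤ ∫⁻ x in Ici (1:ℝ), ENNReal.ofReal (T ^ (2 - γ)) *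
          (ENNReal.ofReal (μ * x ^ (-(1 + μ))) * ENNReal.ofReal (x ^ γ)) :=
        setLIntegral_mono_ae (by fun_prop)
          (Filter.Eventually.of_forall hle)
    _ = ENNReal.ofReal (T ^ (2 - γ)) * ENNReal.ofReal (μ / (μ - γ)) := by
        rw [lintegral_const_mul' _ _ ENNReal.ofReal_ne_top,
          pareto_lint_rpow hμ hγμ le_rfl, Real.one_rpow, mul_one]
lemma herf_det {μ ε δ a : ℝ} (hμ1 : 1 < μ) (hε : 0 < ε) (hε1 : ε ≤ 1)
    (ha : a = 1/μ) (hδ : δ = ε/8)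
    {K : ℕ} (hK : 2 ≤ K) {v : ℕ → ℝ}
    (h1 : ∀ i ∈ Finset.range K, 1 ≤ v i)
    (hS : ∑ i ∈ Finset.range K, v i ≤ (K:ℝ) ^ (1 + δ))
    (hQ : ∑ i ∈ Finset.range K, v i ^ 2 ≤ (K:ℝ) ^ (2*a + ε))
    (hbig : ∃ i ∈ Finset.range K, (K:ℝ) ^ (a*(1-δ)) < v i) :
    |Real.log ((∑ i ∈ Finset.range K, v i ^ 2) / (∑ i ∈ Finset.range K, v i) ^ 2)
        / Real.log K - 2 * (1 - μ) / μ| ≤ ε := by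
  have hμ0 : (0:ℝ) < μ := by linarith
  have ha0 : 0 < a := by rw [ha]; positivity
  have ha1 : a ≤ 1 := by rw [ha]; rw [div_le_one hμ0]; linarith
  have hδ0 : 0 < δ := by rw [hδ]; linarith
  have hδ1 : δ ≤ 1/8 := by rw [hδ]; linarith
  have hK1 : (1:ℝ) < (K:ℝ) := by exact_mod_cast lt_of_lt_of_le one_lt_two (by exact_mod_cast hK)
  have hKpos : (0:ℝ) < (K:ℝ) := by linarith
  have hlogK : 0 < Real.log K := Real.log_pos hK1
  set S := ∑ i ∈ Finset.range K, v i with hSdef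
  set Q := ∑ i ∈ Finset.range K, v i ^ 2 with hQdef
  have hSK : (K:ℝ) ≤ S := by
    have : ∑ i ∈ Finset.range K, (1:ℝ) ≤ S := Finset.sum_le_sum h1
    simpa using this
  have hSpos : 0 < S := lt_of_lt_of_le hKpos hSK
  obtain ⟨i0, hi0, hb⟩ := hbig
  have htpos : (1:ℝ) ≤ (K:ℝ) ^ (a*(1-δ)) :=
    Real.one_le_rpow hK1.le (by nlinarith)
  have hQt : (K:ℝ) ^ (2*(a*(1-δ))) ≤ Q := by
    have h2 : ((K:ℝ) ^ (a*(1-δ)))^2 ≤ v i0 ^ 2 :=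
      pow_le_pow_left₀ (by linarith) hb.le 2
    have h3 : v i0 ^ 2 ≤ Q :=
      Finset.single_le_sum (fun i _ => sq_nonneg (v i)) hi0
    have h4 : ((K:ℝ) ^ (a*(1-δ)))^2 = (K:ℝ) ^ (2*(a*(1-δ))) := by
      rw [← Real.rpow_natCast ((K:ℝ) ^ (a*(1-δ))) 2, ← Real.rpow_mul hKpos.le]
      norm_num; ring_nf
    linarith [h4 ▸ h2]
  have hQpos : 0 < Q := lt_of_lt_of_le (by positivity) hQt
  have hlogQu : Real.log Q ≤ (2*a + ε) * Real.log K := by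
    rw [← Real.log_rpow hKpos]
    exact Real.log_le_log hQpos hQ
  have hlogQl : 2*(a*(1-δ)) * Real.log K ≤ Real.log Q := by
    rw [← Real.log_rpow hKpos]
    exact Real.log_le_log (by positivity) hQt
  have hlogSu : Real.log S ≤ (1 + δ) * Real.log K := by
    rw [← Real.log_rpow hKpos]
    exact Real.log_le_log hSpos hS
  have hlogSl : Real.log K ≤ Real.log S := Real.log_le_log hKpos hSK
  have hlog_eq : Real.log (Q / S^2) = Real.log Q - 2 * Real.log S := by
    rw [Real.log_div hQpos.ne' (pow_ne_zero 2 hSpos.ne'), Real.log_pow]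
    norm_num
  rw [hlog_eq]
  have hc : 2 * (1 - μ) / μ = 2*a - 2 := by
    rw [ha]; field_simp
  rw [hc, abs_le]
  constructor
  · have hnum : (2*a - 2 - ε) * Real.log K ≤ Real.log Q - 2 * Real.log S := by nlinarith
    have := (le_div_iff₀ hlogK).mpr hnum
    linarith
  · have hnum : Real.log Q - 2 * Real.log S ≤ (2*a - 2 + ε) * Real.log K := by nlinarith
    have := (div_le_iff₀ hlogK).mpr hnum
    linarith

lemma ofReal_sum_le'' {ι : Type*} (s : Finset ι) (f : ι → ℝ) :
    ENNReal.ofReal (∑ i ∈ s, f i) ≤ ∑ i ∈ s, ENNReal.ofReal (f i) := by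
  classical
  induction s using Finset.induction with
  | empty => simp
  | insert _ _ h ih =>
    rw [Finset.sum_insert h, Finset.sum_insert h]
    exact le_trans ENNReal.ofReal_add_le (add_le_add_right ih _)
set_option maxHeartbeats 1000000 in
/-- For `1 < μ < 2` and the Herfindahl–Hirschman index `H_K` of `K` i.i.d.
Pareto(μ) sub-unit sizes, `log H_K / log K` converges in probability to `2(1-μ)/μ`:
the typical Herfindahl index scales as `K^{2(1-μ)/μ}`. -/
theorem herfindahl_typical_scaling
    {Ω : Type*} [MeasureSpace Ω] [IsProbabilityMeasure (ℙ : Measure Ω)]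
    (μ : ℝ) (hμ1 : 1 < μ) (hμ2 : μ < 2)
    (s : ℕ → Ω → ℝ) (hmeas : ∀ i, Measurable (s i))
    (hindep : iIndepFun s ℙ)
    (hdist : ∀ i, Measure.map (s i) ℙ = paretoLaw μ)
    (ε : ℝ) (hε : 0 < ε) :
    Tendsto (fun K : ℕ =>
        ℙ {ω | ε < |Real.log ((∑ i ∈ Finset.range K, (s i ω) ^ 2) /
            (∑ i ∈ Finset.range K, s i ω) ^ 2) / Real.log K - 2 * (1 - μ) / μ|})
      atTop (𝓝 0) := by
  have hμ0 : (0:ℝ) < μ := by linarith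
  have main : ∀ e : ℝ, 0 < e → e ≤ 1 → Tendsto (fun K : ℕ =>
        ℙ {ω | e < |Real.log ((∑ i ∈ Finset.range K, (s i ω) ^ 2) /
            (∑ i ∈ Finset.range K, s i ω) ^ 2) / Real.log K - 2 * (1 - μ) / μ|})
      atTop (𝓝 0) := by
    intro e he he1
    set a : ℝ := 1/μ with ha
    set δ : ℝ := e/8 with hδ
    set γ : ℝ := μ * (1 - e/2) with hγ
    set c2 : ℝ := μ / (μ - γ) with hc2
    set E1 : ℝ := μ / (μ - 1) with hE1
    have ha0 : 0 < a := by positivity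
    have haμ : a * μ = 1 := by rw [ha]; field_simp
    have hδ0 : 0 < δ := by positivity
    have hγ0 : 0 < γ := by nlinarith
    have hγμ : γ < μ := by nlinarith
    have hγ2 : γ ≤ 2 := by linarith
    have haγ : a * γ = 1 - e/2 := by rw [ha, hγ]; field_simp
    have hc2pos : 0 < c2 := by rw [hc2]; exact div_pos hμ0 (by nlinarith)
    have hE1pos : 0 < E1 := by rw [hE1]; exact div_pos hμ0 (by linarith)
    set r : ℕ → ℝ := fun K =>
      E1 * (K:ℝ)^(-δ) + c2 * (K:ℝ)^(-(e/4)) + (K:ℝ)^(-δ) + Real.exp (-(K:ℝ)^δ) with hr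
    -- Step A : tendsto of the bound
    have hA : Tendsto (fun K : ℕ => ENNReal.ofReal (r K)) atTop (𝓝 0) := by
      have t1 : Tendsto (fun K : ℕ => (K:ℝ)^(-δ)) atTop (𝓝 0) :=
        (tendsto_rpow_neg_atTop hδ0).comp tendsto_natCast_atTop_atTop
      have t2 : Tendsto (fun K : ℕ => (K:ℝ)^(-(e/4))) atTop (𝓝 0) :=
        (tendsto_rpow_neg_atTop (by positivity)).comp tendsto_natCast_atTop_atTop
      have t3 : Tendsto (fun K : ℕ => Real.exp (-(K:ℝ)^δ)) atTop (𝓝 0) :=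
        Real.tendsto_exp_neg_atTop_nhds_zero.comp
          ((tendsto_rpow_atTop hδ0).comp tendsto_natCast_atTop_atTop)
      have hr0 : Tendsto r atTop (𝓝 0) := by
        have := (((t1.const_mul E1).add (t2.const_mul c2)).add t1).add t3
        simpa using this
      have := ENNReal.tendsto_ofReal hr0
      simpa using this
    -- Step B : the bound, for K ≥ 2
    have hB : ∀ K : ℕ, 2 ≤ K →
        ℙ {ω | e < |Real.log ((∑ i ∈ Finset.range K, (s i ω) ^ 2) /
            (∑ i ∈ Finset.range K, s i ω) ^ 2) / Real.log K - 2 * (1 - μ) / μ|}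
          ≤ ENNReal.ofReal (r K) := by
      intro K hK
      have hK1 : (1:ℝ) < (K:ℝ) := by exact_mod_cast lt_of_lt_of_le one_lt_two (by exact_mod_cast hK)
      have hKpos : (0:ℝ) < (K:ℝ) := by linarith
      set T : ℝ := (K:ℝ) ^ (a*(1+δ)) with hT
      set t : ℝ := (K:ℝ) ^ (a*(1-δ)) with ht
      have hT1 : (1:ℝ) ≤ T := Real.one_le_rpow hK1.le (by nlinarith)
      have ht1 : (1:ℝ) ≤ t := Real.one_le_rpow hK1.le (by nlinarith)
      -- the events
      set B1 : Set Ω := {ω | (K:ℝ)^(1+δ) < ∑ i ∈ Finset.range K, s i ω} with hB1def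
      set B2 : Set Ω := {ω | (K:ℝ)^(2*a+e) < ∑ i ∈ Finset.range K, min (s i ω) T ^ 2} with hB2def
      set B3 : Set Ω := ⋃ i ∈ Finset.range K, {ω | T < s i ω} with hB3def
      set B4 : Set Ω := {ω | ∀ i ∈ Finset.range K, s i ω ≤ t} with hB4def
      set Nset : Set Ω := ⋃ i ∈ Finset.range K, {ω | s i ω < 1} with hNdef
      -- inclusion
      have hsub : {ω | e < |Real.log ((∑ i ∈ Finset.range K, (s i ω) ^ 2) /
            (∑ i ∈ Finset.range K, s i ω) ^ 2) / Real.log K - 2 * (1 - μ) / μ|}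
          ⊆ B1 ∪ B2 ∪ B3 ∪ B4 ∪ Nset := by
        intro ω hω
        by_contra hnot
        simp only [mem_union, not_or] at hnot
        obtain ⟨⟨⟨⟨h1', h2'⟩, h3'⟩, h4'⟩, h5'⟩ := hnot
        have h1le : ∀ i ∈ Finset.range K, 1 ≤ s i ω := by
          intro i hi
          by_contra hlt
          exact h5' (mem_biUnion hi (by simpa using not_le.mp hlt))
        have hTle : ∀ i ∈ Finset.range K, s i ω ≤ T := by
          intro i hi
          by_contra hlt
          exact h3' (mem_biUnion hi (by simpa using not_le.mp hlt))
        have hQ : ∑ i ∈ Finset.range K, s i ω ^ 2 ≤ (K:ℝ)^(2*a+e) := by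
          have : ∑ i ∈ Finset.range K, s i ω ^ 2
              = ∑ i ∈ Finset.range K, min (s i ω) T ^ 2 :=
            Finset.sum_congr rfl fun i hi => by rw [min_eq_left (hTle i hi)]
          rw [this]
          exact not_lt.mp h2'
        have hbig : ∃ i ∈ Finset.range K, t < s i ω := by
          by_contra hall
          push_neg at hall
          exact h4' fun i hi => (hall i hi)
        have := herf_det hμ1 he he1 ha hδ hK h1le (not_lt.mp h1') hQ hbig
        exact absurd hω (not_lt.mpr this)
      refine le_trans (measure_mono hsub) ?_
      -- null set
      have hzero : ∀ i : ℕ, ℙ {ω | s i ω < 1} = 0 := by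
        intro i
        have hpre : {ω | s i ω < 1} = s i ⁻¹' (Iio 1) := rfl
        rw [hpre, ← Measure.map_apply (hmeas i) measurableSet_Iio, hdist i,
          pareto_apply_Iio _ le_rfl]
      have hN : ℙ Nset = 0 := by
        refine le_antisymm (le_trans (measure_biUnion_finset_le _ _) ?_) zero_le
        simp [hzero]
      -- bound on B1
      have hB1bd : ℙ B1 ≤ ENNReal.ofReal (E1 * (K:ℝ)^(-δ)) := by
        have hsum_meas : Measurable fun ω => ∑ i ∈ Finset.range K, ENNReal.ofReal (s i ω) :=
          Finset.measurable_sum _ fun i _ => (hmeas i).ennreal_ofReal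
        have hsub1 : B1 ⊆ {ω | ENNReal.ofReal ((K:ℝ)^(1+δ))
            ≤ ∑ i ∈ Finset.range K, ENNReal.ofReal (s i ω)} := by
          intro ω hω
          exact le_trans (ENNReal.ofReal_le_ofReal (le_of_lt hω)) (ofReal_sum_le'' _ _)
        have hint : ∫⁻ ω, ∑ i ∈ Finset.range K, ENNReal.ofReal (s i ω) ∂ℙ
            = K * ENNReal.ofReal E1 := by
          rw [lintegral_finset_sum _ fun i _ => (hmeas i).ennreal_ofReal]
          have heach : ∀ i ∈ Finset.range K, ∫⁻ ω, ENNReal.ofReal (s i ω) ∂ℙ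
              = ENNReal.ofReal E1 := by
            intro i _
            have h1 : ∫⁻ ω, ENNReal.ofReal (s i ω) ∂ℙ
                = ∫⁻ x, ENNReal.ofReal x ∂(Measure.map (s i) ℙ) :=
              (lintegral_map (by fun_prop) (hmeas i)).symm
            rw [h1, hdist i, pareto_mean hμ1]
          rw [Finset.sum_congr rfl heach, Finset.sum_const, Finset.card_range, nsmul_eq_mul]
        have hmark := meas_ge_le_lintegral_div (μ := ℙ) hsum_meas.aemeasurable
          (ε := ENNReal.ofReal ((K:ℝ)^(1+δ))) (ENNReal.ofReal_pos.mpr (by positivity)).ne'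
          ENNReal.ofReal_ne_top
        refine le_trans (measure_mono hsub1) (le_trans hmark ?_)
        rw [hint, ← ENNReal.ofReal_natCast K, ← ENNReal.ofReal_mul (Nat.cast_nonneg K),
          ← ENNReal.ofReal_div_of_pos (by positivity)]
        refine ENNReal.ofReal_le_ofReal (le_of_eq ?_)
        have hKdiv : (K:ℝ) / (K:ℝ)^(1+δ) = (K:ℝ)^(-δ) := by
          rw [show -δ = 1 - (1+δ) by ring, Real.rpow_sub hKpos, Real.rpow_one]
        calc (K:ℝ) * E1 / (K:ℝ)^(1+δ) = E1 * ((K:ℝ) / (K:ℝ)^(1+δ)) := by ring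
          _ = E1 * (K:ℝ)^(-δ) := by rw [hKdiv]
      -- bound on B2
      have hB2bd : ℙ B2 ≤ ENNReal.ofReal (c2 * (K:ℝ)^(-(e/4))) := by
        have hmeas2 : ∀ i : ℕ, Measurable fun ω => ENNReal.ofReal (min (s i ω) T ^ 2) :=
          fun i => (((hmeas i).min measurable_const).pow_const 2).ennreal_ofReal
        have hsum_meas : Measurable fun ω =>
            ∑ i ∈ Finset.range K, ENNReal.ofReal (min (s i ω) T ^ 2) :=
          Finset.measurable_sum _ fun i _ => hmeas2 i
        have hsub2 : B2 ⊆ {ω | ENNReal.ofReal ((K:ℝ)^(2*a+e))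
            ≤ ∑ i ∈ Finset.range K, ENNReal.ofReal (min (s i ω) T ^ 2)} := by
          intro ω hω
          exact le_trans (ENNReal.ofReal_le_ofReal (le_of_lt hω)) (ofReal_sum_le'' _ _)
        have hint : ∫⁻ ω, ∑ i ∈ Finset.range K, ENNReal.ofReal (min (s i ω) T ^ 2) ∂ℙ
            ≤ K * (ENNReal.ofReal ((K:ℝ)^(a*(1+δ)*(2-γ))) * ENNReal.ofReal c2) := by
          rw [lintegral_finset_sum _ fun i _ => hmeas2 i]
          have heach : ∀ i ∈ Finset.range K, ∫⁻ ω, ENNReal.ofReal (min (s i ω) T ^ 2) ∂ℙ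
              ≤ ENNReal.ofReal ((K:ℝ)^(a*(1+δ)*(2-γ))) * ENNReal.ofReal c2 := by
            intro i _
            have h1 : ∫⁻ ω, ENNReal.ofReal (min (s i ω) T ^ 2) ∂ℙ
                = ∫⁻ x, ENNReal.ofReal (min x T ^ 2) ∂(Measure.map (s i) ℙ) :=
              (lintegral_map ((((measurable_id.min measurable_const).pow_const 2)).ennreal_ofReal)
                (hmeas i)).symm
            rw [h1, hdist i]
            have h2 := pareto_min_sq hμ0 hγ0 hγμ hγ2 hT1
            have h3 : T ^ (2-γ) = (K:ℝ)^(a*(1+δ)*(2-γ)) := by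
              rw [hT, ← Real.rpow_mul hKpos.le]
            rw [← h3]
            exact h2
          calc ∑ i ∈ Finset.range K, ∫⁻ ω, ENNReal.ofReal (min (s i ω) T ^ 2) ∂ℙ
              ≤ ∑ _i ∈ Finset.range K,
                  ENNReal.ofReal ((K:ℝ)^(a*(1+δ)*(2-γ))) * ENNReal.ofReal c2 :=
                Finset.sum_le_sum heach
            _ = K * (ENNReal.ofReal ((K:ℝ)^(a*(1+δ)*(2-γ))) * ENNReal.ofReal c2) := by
                rw [Finset.sum_const, Finset.card_range, nsmul_eq_mul]
        have hmark := meas_ge_le_lintegral_div (μ := ℙ) hsum_meas.aemeasurable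
          (ε := ENNReal.ofReal ((K:ℝ)^(2*a+e))) (ENNReal.ofReal_pos.mpr (by positivity)).ne'
          ENNReal.ofReal_ne_top
        refine le_trans (measure_mono hsub2) (le_trans hmark ?_)
        refine le_trans (ENNReal.div_le_div_right hint _) ?_
        rw [← ENNReal.ofReal_mul (by positivity), ← ENNReal.ofReal_natCast K,
          ← ENNReal.ofReal_mul (Nat.cast_nonneg K),
          ← ENNReal.ofReal_div_of_pos (by positivity)]
        refine ENNReal.ofReal_le_ofReal ?_
        have ha1 : a ≤ 1 := by rw [ha, div_le_one hμ0]; linarith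
        have h4 : (K:ℝ)^(1 + a*(1+δ)*(2-γ) - (2*a+e))
            = (K:ℝ) * (K:ℝ)^(a*(1+δ)*(2-γ)) / (K:ℝ)^(2*a+e) := by
          rw [Real.rpow_sub hKpos, Real.rpow_add hKpos, Real.rpow_one]
        have hexp : (K:ℝ) * ((K:ℝ)^(a*(1+δ)*(2-γ)) * c2) / (K:ℝ)^(2*a+e)
            = c2 * (K:ℝ)^(1 + a*(1+δ)*(2-γ) - (2*a+e)) := by
          rw [h4]; ring
        rw [hexp]
        have hEe : 1 + a*(1+δ)*(2-γ) - (2*a+e) ≤ -(e/4) := by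
          have hexpand : a*(1+δ)*(2-γ) = (1+δ)*(2*a - (a*γ)) := by ring
          rw [hexpand, haγ, hδ]
          nlinarith [ha1, ha0, he, he1]
        exact mul_le_mul_of_nonneg_left
          (Real.rpow_le_rpow_of_exponent_le hK1.le hEe) hc2pos.le
      -- bound on B3
      have hB3bd : ℙ B3 ≤ ENNReal.ofReal ((K:ℝ)^(-δ)) := by
        refine le_trans (measure_biUnion_finset_le _ _) ?_
        have heach : ∀ i ∈ Finset.range K, ℙ {ω | T < s i ω} = ENNReal.ofReal (T ^ (-μ)) := by
          intro i _
          have hpre : {ω | T < s i ω} = s i ⁻¹' (Ioi T) := rfl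
          rw [hpre, ← Measure.map_apply (hmeas i) measurableSet_Ioi, hdist i,
            pareto_apply_Ioi hμ0 hT1]
        rw [Finset.sum_congr rfl heach, Finset.sum_const, Finset.card_range, nsmul_eq_mul,
          ← ENNReal.ofReal_natCast K, ← ENNReal.ofReal_mul (Nat.cast_nonneg K)]
        refine ENNReal.ofReal_le_ofReal (le_of_eq ?_)
        have h1 : T ^ (-μ) = (K:ℝ)^(-(1+δ)) := by
          rw [hT, ← Real.rpow_mul hKpos.le]
          congr 1
          linear_combination (-(1+δ)) * haμ
        rw [h1, show -δ = 1 + -(1+δ) by ring, Real.rpow_add hKpos, Real.rpow_one]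
      -- bound on B4
      have hB4bd : ℙ B4 ≤ ENNReal.ofReal (Real.exp (-(K:ℝ)^δ)) := by
        have hBeq : B4 = ⋂ i ∈ Finset.range K, s i ⁻¹' (Iic t) := by
          ext ω
          simp only [hB4def, mem_setOf_eq, mem_iInter, mem_preimage, mem_Iic]
        rw [hBeq, hindep.measure_inter_preimage_eq_mul (Finset.range K)
          (fun i _ => measurableSet_Iic)]
        have heach : ∀ i ∈ Finset.range K,
            ℙ (s i ⁻¹' Iic t) = ENNReal.ofReal (1 - t ^ (-μ)) := by
          intro i _
          rw [← Measure.map_apply (hmeas i) measurableSet_Iic, hdist i,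
            pareto_apply_Iic hμ0 ht1]
        have hx1 : t ^ (-μ) ≤ 1 :=
          Real.rpow_le_one_of_one_le_of_nonpos ht1 (by linarith)
        have hx0 : (0:ℝ) ≤ t ^ (-μ) := Real.rpow_nonneg (by linarith) _
        rw [Finset.prod_congr rfl heach, Finset.prod_const, Finset.card_range,
          ← ENNReal.ofReal_pow (by linarith)]
        refine ENNReal.ofReal_le_ofReal ?_
        have hxval : t ^ (-μ) = (K:ℝ)^(-(1-δ)) := by
          rw [ht, ← Real.rpow_mul hKpos.le]
          congr 1
          linear_combination (-(1-δ)) * haμ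
        have step1 : (1 - t ^ (-μ))^K ≤ Real.exp (-(t ^ (-μ)))^K :=
          pow_le_pow_left₀ (by linarith) (by linarith [Real.add_one_le_exp (-(t ^ (-μ)))]) K
        have step2 : Real.exp (-(t ^ (-μ)))^K = Real.exp ((K:ℝ) * (-(t ^ (-μ)))) :=
          (Real.exp_nat_mul _ K).symm
        have step3 : (K:ℝ) * (-(t ^ (-μ))) = -((K:ℝ)^δ) := by
          rw [hxval, show δ = 1 + -(1-δ) by ring, Real.rpow_add hKpos, Real.rpow_one]
          ring
        calc (1 - t ^ (-μ))^K ≤ Real.exp (-(t ^ (-μ)))^K := step1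
          _ = Real.exp ((K:ℝ) * (-(t ^ (-μ)))) := step2
          _ = Real.exp (-((K:ℝ)^δ)) := by rw [step3]
      -- combine
      calc ℙ (B1 ∪ B2 ∪ B3 ∪ B4 ∪ Nset)
          ≤ ℙ (B1 ∪ B2 ∪ B3 ∪ B4) + ℙ Nset := measure_union_le _ _
        _ = ℙ (B1 ∪ B2 ∪ B3 ∪ B4) := by rw [hN, add_zero]
        _ ≤ ℙ B1 + ℙ B2 + ℙ B3 + ℙ B4 := by
            refine le_trans (measure_union_le _ _) (add_le_add_left ?_ _)
            refine le_trans (measure_union_le _ _) (add_le_add_left ?_ _)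
            exact measure_union_le _ _
        _ ≤ ENNReal.ofReal (E1 * (K:ℝ)^(-δ)) + ENNReal.ofReal (c2 * (K:ℝ)^(-(e/4)))
              + ENNReal.ofReal ((K:ℝ)^(-δ)) + ENNReal.ofReal (Real.exp (-(K:ℝ)^δ)) :=
            add_le_add (add_le_add (add_le_add hB1bd hB2bd) hB3bd) hB4bd
        _ = ENNReal.ofReal (r K) := by
            have hn1 : 0 ≤ E1 * (K:ℝ)^(-δ) := mul_nonneg hE1pos.le (Real.rpow_nonneg hKpos.le _)
            have hn2 : 0 ≤ c2 * (K:ℝ)^(-(e/4)) := mul_nonneg hc2pos.le (Real.rpow_nonneg hKpos.le _)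
            have hn3 : 0 ≤ (K:ℝ)^(-δ) := Real.rpow_nonneg hKpos.le _
            simp only [hr]
            rw [← ENNReal.ofReal_add hn1 hn2,
              ← ENNReal.ofReal_add (add_nonneg hn1 hn2) hn3,
              ← ENNReal.ofReal_add (add_nonneg (add_nonneg hn1 hn2) hn3) (Real.exp_nonneg _)]
    refine tendsto_of_tendsto_of_tendsto_of_le_of_le' tendsto_const_nhds hA
      (Filter.Eventually.of_forall fun K => zero_le) ?_
    filter_upwards [eventually_ge_atTop 2] with K hK using hB K hK
  rcases le_or_gt ε 1 with h | h
  · exact main ε hε h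
  · refine tendsto_of_tendsto_of_tendsto_of_le_of_le tendsto_const_nhds (main 1 one_pos le_rfl)
      (fun K => zero_le) (fun K => measure_mono fun ω hω => ?_)
    exact lt_trans h hω
end

section
/- For every real μ with 0 < μ < 2, the integral I(μ) = ∫_0^∞ t^{-(1+μ)} (1 - e^{-t²/2}) dt converges and equals -2^{-(1+μ/2)} Γ(-μ/2), where Γ is the real Gamma function (note Γ(-μ/2) < 0 for 0 < μ < 2, so I(μ) > 0). -/
open MeasureTheory Set Filter Real

-- Step 1: the Gaussian moment integral
lemma gauss_moment (μ : ℝ) (hμ2 : μ < 2) :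
    ∫ t in Ioi (0:ℝ), t ^ (1 - μ) * Real.exp (-t ^ 2 / 2)
      = 2 ^ (-(μ/2)) * Real.Gamma (1 - μ/2) := by
  have h := integral_comp_rpow_Ioi_of_pos
      (g := fun x : ℝ => (1/2 : ℝ) * (x ^ (-(μ/2)) * Real.exp (-((1/2) * x)))) (p := 2) two_pos
  have h1 : ∫ x in Ioi (0:ℝ), ((2:ℝ) * x ^ ((2:ℝ) - 1)) •
      ((1/2 : ℝ) * ((x ^ (2:ℝ)) ^ (-(μ/2)) * Real.exp (-((1/2) * x ^ (2:ℝ)))))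
      = ∫ t in Ioi (0:ℝ), t ^ (1 - μ) * Real.exp (-t ^ 2 / 2) := by
    refine setIntegral_congr_fun measurableSet_Ioi (fun x hx => ?_)
    have hx0 : (0:ℝ) < x := hx
    have hxp : (x ^ (2:ℝ)) ^ (-(μ/2)) = x ^ (-μ) := by
      rw [← Real.rpow_mul hx0.le, show (2:ℝ)*(-(μ/2)) = -μ by ring]
    rw [hxp, smul_eq_mul,
      show (1:ℝ) - μ = 1 + (-μ) by ring, Real.rpow_add hx0, Real.rpow_one,
      show ((2:ℝ) - 1) = 1 by norm_num, Real.rpow_one, Real.rpow_two]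
    ring_nf
  have h2 : ∫ x in Ioi (0:ℝ), (1/2 : ℝ) * (x ^ (-(μ/2)) * Real.exp (-((1/2) * x)))
      = (1/2 : ℝ) * ((1 / (1/2:ℝ)) ^ (1 - μ/2) * Real.Gamma (1 - μ/2)) := by
    rw [MeasureTheory.integral_const_mul]
    congr 1
    have := Real.integral_rpow_mul_exp_neg_mul_Ioi (a := 1 - μ/2) (r := (1/2:ℝ))
      (by linarith) (by norm_num)
    rw [← this]
    refine setIntegral_congr_fun measurableSet_Ioi (fun x hx => ?_)
    norm_num
  rw [h1, h2] at h
  rw [h]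
  rw [show (1:ℝ)/(1/2:ℝ) = 2 by norm_num,
    show (1:ℝ) - μ/2 = 1 + (-(μ/2)) by ring, Real.rpow_add two_pos, Real.rpow_one]
  ring_nf

lemma target_integrable (μ : ℝ) (hμ0 : 0 < μ) (hμ2 : μ < 2) :
    IntegrableOn (fun t : ℝ => t ^ (-(1 + μ)) * (1 - Real.exp (-t ^ 2 / 2))) (Ioi 0) volume := by
  have hcont : ContinuousOn (fun t : ℝ => t ^ (-(1 + μ)) * (1 - Real.exp (-t ^ 2 / 2))) (Ioi 0) := by
    apply ContinuousOn.mul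
    · intro x hx
      exact (Real.continuousAt_rpow_const x _ (Or.inl (ne_of_gt hx))).continuousWithinAt
    · fun_prop
  have hmeas : ∀ s ⊆ Ioi (0:ℝ), MeasurableSet s → AEStronglyMeasurable
      (fun t : ℝ => t ^ (-(1 + μ)) * (1 - Real.exp (-t ^ 2 / 2))) (volume.restrict s) :=
    fun s hs hms => ((hcont.mono hs).aestronglyMeasurable hms)
  have hexp_le : ∀ x : ℝ, 1 - Real.exp (-x) ≤ x := by
    intro x
    nlinarith [Real.add_one_le_exp (-x)]
  have hexp_nonneg : ∀ x : ℝ, 0 ≤ x → 0 ≤ 1 - Real.exp (-x) := by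
    intro x hx
    have : Real.exp (-x) ≤ 1 := Real.exp_le_one_iff.mpr (by linarith)
    linarith
  rw [show Ioi (0:ℝ) = Ioc 0 1 ∪ Ioi 1 from (Ioc_union_Ioi_eq_Ioi zero_le_one).symm]
  apply IntegrableOn.union
  · -- near 0: dominate by (1/2) * t^(1-μ)
    have hbase : IntegrableOn (fun t : ℝ => (1/2 : ℝ) * t ^ (1 - μ)) (Ioc 0 1) volume := by
      have h0 : IntegrableOn (fun t : ℝ => t ^ (1 - μ)) (Ioc 0 1) volume := by
        rw [← intervalIntegrable_iff_integrableOn_Ioc_of_le zero_le_one]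
        exact intervalIntegral.intervalIntegrable_rpow' (by linarith)
      exact h0.const_mul _
    apply Integrable.mono' hbase (hmeas _ (fun x hx => hx.1) measurableSet_Ioc)
    filter_upwards [ae_restrict_mem measurableSet_Ioc] with t ht
    have ht0 : (0:ℝ) < t := ht.1
    have h1 : 0 ≤ 1 - Real.exp (-t ^ 2 / 2) := by
      have := hexp_nonneg (t ^ 2 / 2) (by positivity)
      rwa [neg_div]
    have h2 : 1 - Real.exp (-t ^ 2 / 2) ≤ t ^ 2 / 2 := by
      have := hexp_le (t ^ 2 / 2)
      rwa [neg_div]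
    rw [Real.norm_eq_abs, abs_of_nonneg (mul_nonneg (Real.rpow_nonneg ht0.le _) h1)]
    calc t ^ (-(1 + μ)) * (1 - Real.exp (-t ^ 2 / 2))
        ≤ t ^ (-(1 + μ)) * (t ^ 2 / 2) :=
          mul_le_mul_of_nonneg_left h2 (Real.rpow_nonneg ht0.le _)
      _ = (1/2 : ℝ) * t ^ (1 - μ) := by
          rw [show (1:ℝ) - μ = -(1 + μ) + 2 by ring, Real.rpow_add ht0,
            show ((2:ℝ)) = ((2:ℕ):ℝ) by norm_num, Real.rpow_natCast]
          ring
  · -- near ∞: dominate by t^(-(1+μ))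
    have hbase : IntegrableOn (fun t : ℝ => t ^ (-(1 + μ))) (Ioi 1) volume :=
      integrableOn_Ioi_rpow_of_lt (by linarith) zero_lt_one
    apply Integrable.mono' hbase (hmeas _ (fun x hx => mem_Ioi.mpr (lt_trans zero_lt_one hx)) measurableSet_Ioi)
    filter_upwards [ae_restrict_mem measurableSet_Ioi] with t ht
    have ht0 : (0:ℝ) < t := lt_trans zero_lt_one ht
    have h1 : 0 ≤ 1 - Real.exp (-t ^ 2 / 2) := by
      have := hexp_nonneg (t ^ 2 / 2) (by positivity)
      rwa [neg_div]
    have h2 : 1 - Real.exp (-t ^ 2 / 2) ≤ 1 := by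
      have := Real.exp_pos (-t ^ 2 / 2); linarith
    rw [Real.norm_eq_abs, abs_of_nonneg (mul_nonneg (Real.rpow_nonneg ht0.le _) h1)]
    calc t ^ (-(1 + μ)) * (1 - Real.exp (-t ^ 2 / 2))
        ≤ t ^ (-(1 + μ)) * 1 := mul_le_mul_of_nonneg_left h2 (Real.rpow_nonneg ht0.le _)
      _ = t ^ (-(1 + μ)) := mul_one _

/-- For every `0 < μ < 2`, the integral
`I(μ) = ∫_0^∞ t^{-(1+μ)} (1 - e^{-t²/2}) dt` converges and equals `-2^{-(1+μ/2)} Γ(-μ/2)`. -/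
theorem I_mu_integral (μ : ℝ) (hμ0 : 0 < μ) (hμ2 : μ < 2) :
    IntegrableOn (fun t : ℝ => t ^ (-(1 + μ)) * (1 - Real.exp (-t ^ 2 / 2))) (Ioi 0) volume ∧
    ∫ t in Ioi (0 : ℝ), t ^ (-(1 + μ)) * (1 - Real.exp (-t ^ 2 / 2))
      = -(2 : ℝ) ^ (-(1 + μ / 2)) * Real.Gamma (-μ / 2) := by
  have hμ0' : μ ≠ 0 := ne_of_gt hμ0
  set u : ℝ → ℝ := fun t => 1 - Real.exp (-t ^ 2 / 2) with hu_def
  set u' : ℝ → ℝ := fun t => t * Real.exp (-t ^ 2 / 2) with hu'_def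
  set v : ℝ → ℝ := fun t => -(1/μ) * t ^ (-μ) with hv_def
  set v' : ℝ → ℝ := fun t => t ^ (-(1 + μ)) with hv'_def
  refine ⟨target_integrable μ hμ0 hμ2, ?_⟩
  -- derivatives
  have hu : ∀ t ∈ Ioi (0:ℝ), HasDerivAt u (u' t) t := by
    intro t _
    have h1 : HasDerivAt (fun t : ℝ => -t ^ 2 / 2) (-t) t := by
      have := ((hasDerivAt_pow 2 t).neg).div_const 2
      refine this.congr_deriv ?_
      push_cast; ring
    have h3 := (h1.exp).const_sub 1
    refine h3.congr_deriv ?_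
    simp [hu'_def]; ring
  have hv : ∀ t ∈ Ioi (0:ℝ), HasDerivAt v (v' t) t := by
    intro t ht
    have h1 := (Real.hasDerivAt_rpow_const (x := t) (p := -μ)
      (Or.inl (ne_of_gt ht))).const_mul (-(1/μ))
    refine h1.congr_deriv ?_
    rw [hv'_def, show -(1 + μ) = -μ - 1 by ring]
    field_simp
  -- integrability of u * v'
  have huv' : IntegrableOn (u * v') (Ioi 0) volume := by
    apply (target_integrable μ hμ0 hμ2).congr_fun _ measurableSet_Ioi
    intro t _
    simp only [Pi.mul_apply, hu_def, hv'_def]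
    ring
  -- integrability of u' * v
  have hu'v : IntegrableOn (u' * v) (Ioi 0) volume := by
    have hbase := integrableOn_rpow_mul_exp_neg_mul_sq (b := (1/2:ℝ)) one_half_pos
      (s := 1 - μ) (by linarith)
    have hb2 : IntegrableOn (fun x : ℝ => -(1/μ) * (x ^ (1 - μ) * Real.exp (-(1/2) * x ^ 2)))
        (Ioi 0) volume := hbase.const_mul _
    apply hb2.congr_fun _ measurableSet_Ioi
    intro t ht
    simp only [Pi.mul_apply, hu'_def, hv_def]
    rw [show (1:ℝ) - μ = 1 + (-μ) by ring, Real.rpow_add ht, Real.rpow_one]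
    ring_nf
  -- boundary limits
  have h_zero : Filter.Tendsto (u * v) (nhdsWithin 0 (Ioi 0)) (nhds 0) := by
    have hlow : Filter.Tendsto (fun t : ℝ => -((1/(2*μ)) * t ^ (2 - μ)))
        (nhdsWithin 0 (Ioi 0)) (nhds 0) := by
      have h1 : Filter.Tendsto (fun t : ℝ => t ^ (2 - μ)) (nhdsWithin 0 (Ioi 0)) (nhds 0) := by
        have hc := (Real.continuousAt_rpow_const 0 (2 - μ) (Or.inr (by linarith)))
        have h2 := hc.tendsto.mono_left (nhdsWithin_le_nhds (s := Ioi (0:ℝ)))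
        rwa [Real.zero_rpow (by linarith : (2:ℝ) - μ ≠ 0)] at h2
      have := (h1.const_mul (1/(2*μ))).neg
      simpa using this
    apply tendsto_of_tendsto_of_tendsto_of_le_of_le' hlow tendsto_const_nhds
    · filter_upwards [self_mem_nhdsWithin] with t ht
      have ht0 : (0:ℝ) < t := ht
      have hub : u t ≤ t ^ 2 / 2 := by
        have := Real.add_one_le_exp (-(t^2/2))
        simp only [hu_def]
        rw [neg_div]
        linarith
      have hu_nn : 0 ≤ u t := by
        have : Real.exp (-t ^ 2 / 2) ≤ 1 := Real.exp_le_one_iff.mpr (by nlinarith [sq_nonneg t])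
        simp only [hu_def]; linarith
      have hrp : (0:ℝ) < t ^ (-μ) := Real.rpow_pos_of_pos ht0 _
      simp only [Pi.mul_apply, hv_def]
      have key : u t * t ^ (-μ) ≤ (t ^ 2 / 2) * t ^ (-μ) :=
        mul_le_mul_of_nonneg_right hub hrp.le
      have h2 : (t ^ 2 / 2) * t ^ (-μ) = (1/2) * t ^ (2 - μ) := by
        rw [show (2:ℝ) - μ = -μ + 2 by ring, Real.rpow_add ht0,
          show ((2:ℝ)) = ((2:ℕ):ℝ) by norm_num, Real.rpow_natCast]
        ring
      have hμinv : (0:ℝ) < 1/μ := by positivity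
      calc -((1/(2*μ)) * t ^ (2 - μ)) = -(1/μ) * ((1/2) * t ^ (2 - μ)) := by ring
        _ = -(1/μ) * ((t ^ 2 / 2) * t ^ (-μ)) := by rw [h2]
        _ ≤ -(1/μ) * (u t * t ^ (-μ)) := by
            apply mul_le_mul_of_nonpos_left key (by linarith)
        _ = u t * (-(1/μ) * t ^ (-μ)) := by ring
    · filter_upwards [self_mem_nhdsWithin] with t ht
      have ht0 : (0:ℝ) < t := ht
      have hu_nn : 0 ≤ u t := by
        have : Real.exp (-t ^ 2 / 2) ≤ 1 := Real.exp_le_one_iff.mpr (by nlinarith [sq_nonneg t])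
        simp only [hu_def]; linarith
      have hrp : (0:ℝ) < t ^ (-μ) := Real.rpow_pos_of_pos ht0 _
      have hμinv : (0:ℝ) < 1/μ := by positivity
      simp only [Pi.mul_apply, hv_def]
      rw [show u t * (-(1/μ) * t ^ (-μ)) = -(u t * ((1/μ) * t ^ (-μ))) from by ring]
      exact neg_nonpos_of_nonneg (mul_nonneg hu_nn (by positivity))
  have h_infty : Filter.Tendsto (u * v) Filter.atTop (nhds 0) := by
    have hv0 : Filter.Tendsto v Filter.atTop (nhds 0) := by
      have := (tendsto_rpow_neg_atTop hμ0).const_mul (-(1/μ))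
      simpa [hv_def] using this
    have hu1 : Filter.Tendsto u Filter.atTop (nhds 1) := by
      have harg : Filter.Tendsto (fun t : ℝ => -t ^ 2 / 2) Filter.atTop Filter.atBot := by
        have h1 : Filter.Tendsto (fun t : ℝ => t ^ 2) Filter.atTop Filter.atTop :=
          tendsto_pow_atTop two_ne_zero
        have h2 := (Filter.tendsto_neg_atTop_atBot.comp h1).atBot_div_const two_pos
        simpa [Function.comp_def] using h2
      have he : Filter.Tendsto (fun t : ℝ => Real.exp (-t ^ 2 / 2)) Filter.atTop (nhds 0) :=
        Real.tendsto_exp_atBot.comp harg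
      have := he.const_sub 1
      simpa [hu_def] using this
    have := hu1.mul hv0
    simpa [Pi.mul_def] using this
  -- integration by parts
  have key := MeasureTheory.integral_Ioi_mul_deriv_eq_deriv_mul hu hv huv' hu'v h_zero h_infty
  have h_target : ∫ t in Ioi (0:ℝ), t ^ (-(1 + μ)) * (1 - Real.exp (-t ^ 2 / 2))
      = ∫ t in Ioi (0:ℝ), u t * v' t := by
    refine setIntegral_congr_fun measurableSet_Ioi (fun t ht => ?_)
    simp only [hu_def, hv'_def]; ring
  have h_uv : ∫ t in Ioi (0:ℝ), u' t * v t
      = -(1/μ) * (2 ^ (-(μ/2)) * Real.Gamma (1 - μ/2)) := by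
    rw [← gauss_moment μ hμ2, ← MeasureTheory.integral_const_mul]
    refine setIntegral_congr_fun measurableSet_Ioi (fun t ht => ?_)
    simp only [hu'_def, hv_def]
    rw [show (1:ℝ) - μ = 1 + (-μ) by ring, Real.rpow_add ht, Real.rpow_one]
    ring
  rw [h_target, key, h_uv]
  have hG : Real.Gamma (1 - μ/2) = (-(μ/2)) * Real.Gamma (-(μ/2)) := by
    rw [show (1:ℝ) - μ/2 = -(μ/2) + 1 by ring]
    exact Real.Gamma_add_one (by simpa using (div_ne_zero hμ0' two_ne_zero))
  rw [hG, show -μ/2 = -(μ/2) by ring,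
    show -(1 + μ/2) = -1 + (-(μ/2)) by ring, Real.rpow_add two_pos, Real.rpow_neg_one]
  field_simp
  ring
end
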